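/- arXiv:2003.11279 — 6 statements merged into one kernel-verified Lean document; each statement's English description precedes it below -/
import Mathlib

section
/- Let (g,B) be a finite-dimensional quadratic Lie algebra over a field of characteristic 0 with a ℤ/2-grading g = k⊕p (i.e. [k,k]⊆k, [k,p]⊆p, [p,p]⊆k) such that k and p are B-orthogonal. Fix a basis {w_k} of k with B-dual basis {w^k}, a basis {z_i} of p with B-dual basis {z^i}, and let {z_i*} ⊂ p* be the dual basis of {z_i}. In U(g)⊗𝒲(p⊕p*,ω) set D⁻ = Σ_i z_i⊗z_i*, D⁺ = Σ_i z_i⊗z^i, let ν : k → 𝒲(p⊕p*,ω) be the Lie algebra homomorphism ν(x) = Σ_i [x,z_i] z_i*, and for x ∈ k set Δ(x) = x⊗1 + 1⊗ν(x). Let Ω(g) = Σ_k w^k w_k + Σ_i z^i z_i ∈ U(g), Ω(k) = Σ_k w^k w_k ∈ U(k), ν(Ω(k)) = Σ_k ν(w_k)ν(w^k), and Δ(Ω(k)) = Σ_k Δ(w_k)Δ(w^k). Then [D⁺,D⁻] = (−Ω(g)+Ω(k))⊗1 − Σ_k w_k⊗ν(w^k), and also [D⁺,D⁻] = (−Ω(g)+(3/2)Ω(k))⊗1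 − (1/2)Δ(Ω(k)) + (1/2)·1⊗ν(Ω(k)). -/
noncomputable section

open scoped TensorProduct

/-- The defining relation of the Weyl algebra of a symplectic form `ω`. -/
def weylRel (R : Type*) [CommRing R] (U : Type*) [AddCommGroup U] [Module R U]
    (ω : U →ₗ[R] U →ₗ[R] R) : TensorAlgebra R U → TensorAlgebra R U → Prop :=
  fun a b => ∃ u w : U,
    a = TensorAlgebra.ι R u * TensorAlgebra.ι R w ∧
    b = TensorAlgebra.ι R w * TensorAlgebra.ι R u + algebraMap R _ (ω u w)

/-- The Weyl algebra of `(U, ω)`. -/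
abbrev WeylAlg (R : Type*) [CommRing R] (U : Type*) [AddCommGroup U] [Module R U]
    (ω : U →ₗ[R] U →ₗ[R] R) := RingQuot (weylRel R U ω)

/-- The canonical linear map `U → 𝒲(U,ω)`. -/
def weylι (R : Type*) [CommRing R] (U : Type*) [AddCommGroup U] [Module R U]
    (ω : U →ₗ[R] U →ₗ[R] R) : U →ₗ[R] WeylAlg R U ω :=
  (RingQuot.mkAlgHom R (weylRel R U ω)).toLinearMap ∘ₗ TensorAlgebra.ι R

/-- The canonical symplectic form on `p ⊕ p*`: `ω(p,p) = ω(p*,p*) = 0`, `ω(α,v) = α(v)`. -/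
def sympForm (R : Type*) [CommRing R] (V : Type*) [AddCommGroup V] [Module R V] :
    (V × Module.Dual R V) →ₗ[R] (V × Module.Dual R V) →ₗ[R] R :=
  LinearMap.mk₂ R (fun u w => u.2 w.1 - w.2 u.1)
    (by intro m₁ m₂ n; simp; ring)
    (by intro c m n; simp; ring)
    (by intro m n₁ n₂; simp; ring)
    (by intro c m n; simp; ring)

/-- The image of a vector `v ∈ p` in the Weyl algebra `𝒲(p ⊕ p*, ω)`. -/
def wVec (R : Type*) [CommRing R] (V : Type*) [AddCommGroup V] [Module R V] (v : V) :
    WeylAlg R (V × Module.Dual R V) (sympForm R V) :=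
  weylι R (V × Module.Dual R V) (sympForm R V) (v, 0)

/-- The image of a functional `φ ∈ p*` in the Weyl algebra `𝒲(p ⊕ p*, ω)`. -/
def wDual (R : Type*) [CommRing R] (V : Type*) [AddCommGroup V] [Module R V]
    (φ : Module.Dual R V) : WeylAlg R (V × Module.Dual R V) (sympForm R V) :=
  weylι R (V × Module.Dual R V) (sympForm R V) (0, φ)

/-! ### Auxiliary lemmas -/

section Aux

variable {R : Type*} [CommRing R] {U : Type*} [AddCommGroup U] [Module R U]
  (ω : U →ₗ[R] U →ₗ[R] R)

lemma weyl_comm (u v : U) : weylι R U ω u * weylι R U ω v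
    = weylι R U ω v * weylι R U ω u + algebraMap R (WeylAlg R U ω) (ω u v) := by
  have h : weylRel R U ω (TensorAlgebra.ι R u * TensorAlgebra.ι R v)
      (TensorAlgebra.ι R v * TensorAlgebra.ι R u + algebraMap R _ (ω u v)) := ⟨u, v, rfl, rfl⟩
  have := RingQuot.mkAlgHom_rel R h
  simpa [weylι, map_mul, map_add] using this

variable {V : Type*} [AddCommGroup V] [Module R V]

lemma wDual_mul_wVec (φ : Module.Dual R V) (v : V) :
    wDual R V φ * wVec R V v = wVec R V v * wDual R V φ + algebraMap R _ (φ v) := by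
  have := weyl_comm (sympForm R V) (0, φ) (v, 0)
  simpa [wDual, wVec, sympForm] using this

/-- `wVec` as a linear map. -/
def wVecL : V →ₗ[R] WeylAlg R (V × Module.Dual R V) (sympForm R V) :=
  (weylι R (V × Module.Dual R V) (sympForm R V)) ∘ₗ (LinearMap.inl R V _)

lemma wVecL_apply (v : V) : wVecL (R := R) v = wVec R V v := rfl

end Aux

/-- A symmetric-coefficients sum swap lemma. -/
lemma symsum {R M V : Type*} [CommRing R] [AddCommGroup M] [Module R M]
    [AddCommGroup V] [Module R V] {ι : Type*} [Fintype ι]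
    (b b' : ι → V) (G : ι → ι → R)
    (hexp : ∀ i, b' i = ∑ l, G i l • b l) (hsym : ∀ i l, G i l = G l i)
    (g : V →ₗ[R] V →ₗ[R] M) :
    ∑ i, g (b i) (b' i) = ∑ i, g (b' i) (b i) := by
  have h1 : ∑ i, g (b i) (b' i) = ∑ i, ∑ l, G i l • g (b i) (b l) := by
    refine Finset.sum_congr rfl fun i _ => ?_
    rw [hexp i, map_sum]
    exact Finset.sum_congr rfl fun l _ => by rw [map_smul]
  have h2 : ∑ i, g (b' i) (b i) = ∑ i, ∑ l, G i l • g (b l) (b i) := by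
    refine Finset.sum_congr rfl fun i _ => ?_
    rw [hexp i, map_sum, LinearMap.sum_apply]
    exact Finset.sum_congr rfl fun l _ => by rw [map_smul, LinearMap.smul_apply]
  rw [h1, h2, Finset.sum_comm]
  exact Finset.sum_congr rfl fun i _ => Finset.sum_congr rfl fun l _ => by rw [hsym]

section UEAInst

attribute [local instance 100] LieRing.ofAssociativeRing

/-- The commutation relation in the universal enveloping algebra. -/
lemma uea_comm {R L : Type*} [CommRing R] [LieRing L] [LieAlgebra R L] (x y : L) :
    UniversalEnvelopingAlgebra.ι R x * UniversalEnvelopingAlgebra.ι R y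
      = UniversalEnvelopingAlgebra.ι R y * UniversalEnvelopingAlgebra.ι R x
        + UniversalEnvelopingAlgebra.ι R ⁅x, y⁆ := by
  have := (UniversalEnvelopingAlgebra.ι R (L := L)).map_lie x y
  rw [Ring.lie_def] at this
  rw [this]; abel

/-- The Lie bracket as a bilinear map. -/
def brkt (R L : Type*) [CommRing R] [LieRing L] [LieAlgebra R L] : L →ₗ[R] L →ₗ[R] L :=
  LinearMap.mk₂ R (fun a b => ⁅a, b⁆) add_lie smul_lie lie_add lie_smul

/-- Shorthand for the universal enveloping algebra inclusion. -/
abbrev UI (𝕜 : Type*) [CommRing 𝕜] {L : Type*} [LieRing L] [LieAlgebra 𝕜 L] (x : L) :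
    UniversalEnvelopingAlgebra 𝕜 L := UniversalEnvelopingAlgebra.ι 𝕜 x

/-- The bracket on a submodule pair, as a bilinear map into `L`. -/
def brP {R L : Type*} [CommRing R] [LieRing L] [LieAlgebra R L] (S T : Submodule R L) :
    ↥S →ₗ[R] ↥T →ₗ[R] L :=
  LinearMap.mk₂ R (fun a b => ⁅(a : L), (b : L)⁆)
    (by intro a b c; simp [add_lie]) (by intro r a b; simp [smul_lie])
    (by intro a b c; simp [lie_add]) (by intro r a b; simp [lie_smul])

@[simp] lemma brP_apply {R L : Type*} [CommRing R] [LieRing L] [LieAlgebra R L]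
    {S T : Submodule R L} (a : ↥S) (b : ↥T) : brP S T a b = ⁅(a : L), (b : L)⁆ := rfl

/-- Bracketing with a fixed element of `p`, as a linear map `k →ₗ p`. -/
def brkL {𝕜 L : Type*} [Field 𝕜] [LieRing L] [LieAlgebra 𝕜 L] {k p : Submodule 𝕜 L}
    (hkp : ∀ x ∈ k, ∀ y ∈ p, ⁅x, y⁆ ∈ p) (v : ↥p) : ↥k →ₗ[𝕜] ↥p where
  toFun x := ⟨⁅(x : L), (v : L)⁆, hkp _ x.2 _ v.2⟩
  map_add' a b := Subtype.ext (by simp [add_lie])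
  map_smul' r a := Subtype.ext (by simp [smul_lie])

/-- The linear version of the map `ν`. -/
def nuL {𝕜 L : Type*} [Field 𝕜] [LieRing L] [LieAlgebra 𝕜 L] {k p : Submodule 𝕜 L}
    (hkp : ∀ x ∈ k, ∀ y ∈ p, ⁅x, y⁆ ∈ p) {ιp : Type*} [Fintype ιp] (z : Module.Basis ιp 𝕜 ↥p) :
    ↥k →ₗ[𝕜] WeylAlg 𝕜 (↥p × Module.Dual 𝕜 ↥p) (sympForm 𝕜 ↥p) :=
  ∑ i, (LinearMap.mulRight 𝕜 (wDual 𝕜 ↥p (z.coord i))) ∘ₗ wVecL ∘ₗ brkL hkp (z i)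

lemma nuL_apply {𝕜 L : Type*} [Field 𝕜] [LieRing L] [LieAlgebra 𝕜 L] {k p : Submodule 𝕜 L}
    (hkp : ∀ x ∈ k, ∀ y ∈ p, ⁅x, y⁆ ∈ p) {ιp : Type*} [Fintype ιp] (z : Module.Basis ιp 𝕜 ↥p)
    (x : ↥k) :
    nuL hkp z x = ∑ i,
      wVec 𝕜 ↥p ⟨⁅(x : L), (z i : L)⁆, hkp _ x.2 _ (z i).2⟩ * wDual 𝕜 ↥p (z.coord i) := by
  simp only [nuL, LinearMap.sum_apply, LinearMap.comp_apply, LinearMap.mulRight_apply]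
  rfl

lemma uea_sum {R L : Type*} [CommRing R] [LieRing L] [LieAlgebra R L] {ι : Type*}
    (s : Finset ι) (f : ι → L) : UniversalEnvelopingAlgebra.ι R (∑ i ∈ s, f i)
      = ∑ i ∈ s, UniversalEnvelopingAlgebra.ι R (f i) := by
  have := map_sum (UniversalEnvelopingAlgebra.ι R (L := L)).toLinearMap f s
  simpa using this

lemma uea_smul {R L : Type*} [CommRing R] [LieRing L] [LieAlgebra R L] (r : R) (x : L) :
    UniversalEnvelopingAlgebra.ι R (r • x) = r • UniversalEnvelopingAlgebra.ι R x := by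
  have := map_smul (UniversalEnvelopingAlgebra.ι R (L := L)).toLinearMap r x
  simpa using this

lemma uea_zero {R L : Type*} [CommRing R] [LieRing L] [LieAlgebra R L] :
    UniversalEnvelopingAlgebra.ι R (0 : L) = 0 := by
  have := map_zero (UniversalEnvelopingAlgebra.ι R (L := L)).toLinearMap
  simpa using this

end UEAInst

lemma sum3 {M : Type*} [AddCommMonoid M] {ι1 ι2 ι3 : Type*} [Fintype ι1] [Fintype ι2]
    [Fintype ι3] (F : ι1 → ι2 → ι3 → M) :
    ∑ a, ∑ b, ∑ c, F a b c = ∑ c, ∑ b, ∑ a, F a b c := by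
  calc ∑ a, ∑ b, ∑ c, F a b c = ∑ b, ∑ a, ∑ c, F a b c := Finset.sum_comm
  _ = ∑ b, ∑ c, ∑ a, F a b c := Finset.sum_congr rfl fun b _ => Finset.sum_comm
  _ = ∑ c, ∑ b, ∑ a, F a b c := Finset.sum_comm

set_option maxHeartbeats 2000000 in
/-- For a `ℤ/2`-graded quadratic Lie algebra `g = k ⊕ p`, in
`U(g) ⊗ 𝒲(p⊕p*,ω)` one has
`[D⁺,D⁻] = (−Ω(g)+Ω(k))⊗1 − Σ_k w_k⊗ν(w^k)`
`        = (−Ω(g)+(3/2)Ω(k))⊗1 − (1/2)Δ(Ω(k)) + (1/2)·1⊗ν(Ω(k))`. -/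
theorem statement1
    (𝕜 : Type*) [Field 𝕜] [CharZero 𝕜]
    (L : Type*) [LieRing L] [LieAlgebra 𝕜 L] [FiniteDimensional 𝕜 L]
    (B : L →ₗ[𝕜] L →ₗ[𝕜] 𝕜)
    (hBsymm : ∀ x y, B x y = B y x)
    (hBnondeg : ∀ x, (∀ y, B x y = 0) → x = 0)
    (hBinv : ∀ x y z, B ⁅x, y⁆ z = B x ⁅y, z⁆)
    (k p : Submodule 𝕜 L) (hcompl : IsCompl k p)
    (hkk : ∀ x ∈ k, ∀ y ∈ k, ⁅x, y⁆ ∈ k)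
    (hkp : ∀ x ∈ k, ∀ y ∈ p, ⁅x, y⁆ ∈ p)
    (hpp : ∀ x ∈ p, ∀ y ∈ p, ⁅x, y⁆ ∈ k)
    (horth : ∀ x ∈ k, ∀ y ∈ p, B x y = 0)
    -- bases `{w_k}` of `k` and `{z_i}` of `p`, with their `B`-dual bases
    (ιk ιp : Type) [Fintype ιk] [Fintype ιp] [DecidableEq ιk] [DecidableEq ιp]
    (w : Module.Basis ιk 𝕜 ↥k) (w' : ιk → ↥k)
    (hw : ∀ i j, B ((w i : L)) ((w' j : L)) = if i = j then 1 else 0)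
    (z : Module.Basis ιp 𝕜 ↥p) (z' : ιp → ↥p)
    (hz : ∀ i j, B ((z i : L)) ((z' j : L)) = if i = j then 1 else 0)
    -- the Lie algebra map `ν : k → 𝒲(p⊕p*,ω)`, `ν(x) = Σ_i [x,z_i] z_i*`
    (ν : ↥k → WeylAlg 𝕜 (↥p × Module.Dual 𝕜 ↥p) (sympForm 𝕜 ↥p))
    (hν : ∀ x : ↥k, ν x = ∑ i,
      wVec 𝕜 ↥p ⟨⁅(x : L), (z i : L)⁆, hkp _ x.2 _ (z i).2⟩ * wDual 𝕜 ↥p (z.coord i))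
    -- the symplectic Dirac elements
    (Dp Dm : UniversalEnvelopingAlgebra 𝕜 L ⊗[𝕜]
      WeylAlg 𝕜 (↥p × Module.Dual 𝕜 ↥p) (sympForm 𝕜 ↥p))
    (hDm : Dm = ∑ i, UniversalEnvelopingAlgebra.ι 𝕜 (z i : L) ⊗ₜ[𝕜] wDual 𝕜 ↥p (z.coord i))
    (hDp : Dp = ∑ i, UniversalEnvelopingAlgebra.ι 𝕜 (z i : L) ⊗ₜ[𝕜] wVec 𝕜 ↥p (z' i))
    -- the Casimir elements
    (Ωg Ωk : UniversalEnvelopingAlgebra 𝕜 L)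
    (hΩg : Ωg = ∑ j, UniversalEnvelopingAlgebra.ι 𝕜 (w' j : L) *
        UniversalEnvelopingAlgebra.ι 𝕜 (w j : L)
      + ∑ i, UniversalEnvelopingAlgebra.ι 𝕜 (z' i : L) *
        UniversalEnvelopingAlgebra.ι 𝕜 (z i : L))
    (hΩk : Ωk = ∑ j, UniversalEnvelopingAlgebra.ι 𝕜 (w' j : L) *
        UniversalEnvelopingAlgebra.ι 𝕜 (w j : L))
    (νΩk : WeylAlg 𝕜 (↥p × Module.Dual 𝕜 ↥p) (sympForm 𝕜 ↥p))
    (hνΩk : νΩk = ∑ j, ν (w j) * ν (w' j))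
    -- the diagonal embedding `Δ(x) = x⊗1 + 1⊗ν(x)` and `Δ(Ω(k))`
    (Δ : ↥k → UniversalEnvelopingAlgebra 𝕜 L ⊗[𝕜]
      WeylAlg 𝕜 (↥p × Module.Dual 𝕜 ↥p) (sympForm 𝕜 ↥p))
    (hΔ : ∀ x : ↥k, Δ x = UniversalEnvelopingAlgebra.ι 𝕜 (x : L) ⊗ₜ[𝕜] 1 + 1 ⊗ₜ[𝕜] ν x)
    (ΔΩk : UniversalEnvelopingAlgebra 𝕜 L ⊗[𝕜]
      WeylAlg 𝕜 (↥p × Module.Dual 𝕜 ↥p) (sympForm 𝕜 ↥p))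
    (hΔΩk : ΔΩk = ∑ j, Δ (w j) * Δ (w' j)) :
    Dp * Dm - Dm * Dp
      = (-Ωg + Ωk) ⊗ₜ[𝕜] 1 - ∑ j, UniversalEnvelopingAlgebra.ι 𝕜 (w j : L) ⊗ₜ[𝕜] ν (w' j) ∧
    Dp * Dm - Dm * Dp
      = (-Ωg + (3 / 2 : 𝕜) • Ωk) ⊗ₜ[𝕜] 1 - (1 / 2 : 𝕜) • ΔΩk + (1 / 2 : 𝕜) • (1 ⊗ₜ[𝕜] νΩk) := by
  classical
  have hcoordB : ∀ (y : ↥p) (l : ιp), z.coord l y = B (y : L) ((z' l : L)) := by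
    intro y l
    have h : (z.coord l : ↥p →ₗ[𝕜] 𝕜) = (B.flip ((z' l : L))) ∘ₗ p.subtype := by
      refine Module.Basis.ext z fun m => ?_
      simp [Module.Basis.coord_apply, Module.Basis.repr_self, Finsupp.single_apply, hz m l]
    rw [h]; rfl
  have hcoordBk : ∀ (x : ↥k) (l : ιk), w.coord l x = B (x : L) ((w' l : L)) := by
    intro x l
    have h : (w.coord l : ↥k →ₗ[𝕜] 𝕜) = (B.flip ((w' l : L))) ∘ₗ k.subtype := by
      refine Module.Basis.ext w fun m => ?_
      simp [Module.Basis.coord_apply, Module.Basis.repr_self, Finsupp.single_apply, hw m l]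
    rw [h]; rfl
  have hexpand_p : ∀ (y : ↥p), y = ∑ l, B (y : L) ((z' l : L)) • z l := by
    intro y
    conv_lhs => rw [← z.sum_repr y]
    exact Finset.sum_congr rfl fun l _ => by rw [← hcoordB y l, Module.Basis.coord_apply]
  have hexpand_k : ∀ (x : ↥k), x = ∑ l, B (x : L) ((w' l : L)) • w l := by
    intro x
    conv_lhs => rw [← w.sum_repr x]
    exact Finset.sum_congr rfl fun l _ => by rw [← hcoordBk x l, Module.Basis.coord_apply]
  have csym : ∀ i j, z.coord i (z' j) = z.coord j (z' i) := by
    intro i j; rw [hcoordB, hcoordB, hBsymm]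
  have csymw : ∀ i j, w.coord i (w' j) = w.coord j (w' i) := by
    intro i j; rw [hcoordBk, hcoordBk, hBsymm]
  -- expansion of the dual families, subtype level
  have hexpz : ∀ i, z' i = ∑ l, z.coord l (z' i) • z l := by
    intro i
    conv_lhs => rw [← z.sum_repr (z' i)]
    exact Finset.sum_congr rfl fun l _ => by rw [Module.Basis.coord_apply]
  have hexpw : ∀ i, w' i = ∑ l, w.coord l (w' i) • w l := by
    intro i
    conv_lhs => rw [← w.sum_repr (w' i)]
    exact Finset.sum_congr rfl fun l _ => by rw [Module.Basis.coord_apply]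
  have hchar : ∀ s : L, s = -s → s = 0 := by
    intro s hs
    have h2 : (2 : 𝕜) • s = 0 := by rw [two_smul]; nth_rewrite 1 [hs]; abel
    simpa [two_ne_zero] using (smul_eq_zero.mp h2)
  have zbr0 : ∑ i, ⁅(z i : L), (z' i : L)⁆ = 0 := by
    have h := symsum (z : ιp → ↥p) z' (fun i l => z.coord l (z' i))
      (fun i => by exact hexpz i) (fun i l => csym l i) (brP p p)
    simp only [brP_apply] at h
    refine hchar _ (h.trans ?_)
    rw [← Finset.sum_neg_distrib]
    exact Finset.sum_congr rfl fun i _ => (lie_skew _ _).symm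
  have wbr0 : ∑ j, ⁅(w j : L), (w' j : L)⁆ = 0 := by
    have h := symsum (w : ιk → ↥k) w' (fun i l => w.coord l (w' i))
      (fun i => by exact hexpw i) (fun i l => csymw l i) (brP k k)
    simp only [brP_apply] at h
    refine hchar _ (h.trans ?_)
    rw [← Finset.sum_neg_distrib]
    exact Finset.sum_congr rfl fun i _ => (lie_skew _ _).symm
  -- ### Main computation, part 1
  have e1 : Dm * Dp
      = (∑ i, ∑ j, (UniversalEnvelopingAlgebra.ι 𝕜 (z i : L) * UniversalEnvelopingAlgebra.ι 𝕜 (z j : L)) ⊗ₜ[𝕜]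
          (wVec 𝕜 ↥p (z' j) * wDual 𝕜 ↥p (z.coord i)))
        + ∑ i, ∑ j, z.coord i (z' j) •
          ((UniversalEnvelopingAlgebra.ι 𝕜 (z i : L) * UniversalEnvelopingAlgebra.ι 𝕜 (z j : L)) ⊗ₜ[𝕜]
            (1 : WeylAlg 𝕜 (↥p × Module.Dual 𝕜 ↥p) (sympForm 𝕜 ↥p))) := by
    rw [hDm, hDp, Fintype.sum_mul_sum]
    simp_rw [Algebra.TensorProduct.tmul_mul_tmul, wDual_mul_wVec, TensorProduct.tmul_add,
      Algebra.algebraMap_eq_smul_one, TensorProduct.tmul_smul, Finset.sum_add_distrib]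
  have e2 : (∑ i, ∑ j, (UniversalEnvelopingAlgebra.ι 𝕜 (z i : L) * UniversalEnvelopingAlgebra.ι 𝕜 (z j : L)) ⊗ₜ[𝕜]
          (wVec 𝕜 ↥p (z' j) * wDual 𝕜 ↥p (z.coord i)))
      = ∑ i, ∑ j, (UniversalEnvelopingAlgebra.ι 𝕜 (z j : L) * UniversalEnvelopingAlgebra.ι 𝕜 (z i : L)) ⊗ₜ[𝕜]
          (wVec 𝕜 ↥p (z' i) * wDual 𝕜 ↥p (z.coord j)) := Finset.sum_comm
  have e3 : Dp * Dm
      = ∑ i, ∑ j, (UniversalEnvelopingAlgebra.ι 𝕜 (z i : L) * UniversalEnvelopingAlgebra.ι 𝕜 (z j : L)) ⊗ₜ[𝕜]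
          (wVec 𝕜 ↥p (z' i) * wDual 𝕜 ↥p (z.coord j)) := by
    rw [hDp, hDm, Fintype.sum_mul_sum]
    simp_rw [Algebra.TensorProduct.tmul_mul_tmul]
  have mainsplit : Dp * Dm - Dm * Dp
      = (∑ i, ∑ j, UniversalEnvelopingAlgebra.ι 𝕜 ⁅(z i : L), (z j : L)⁆ ⊗ₜ[𝕜]
          (wVec 𝕜 ↥p (z' i) * wDual 𝕜 ↥p (z.coord j)))
        - ∑ i, ∑ j, z.coord i (z' j) •
          ((UniversalEnvelopingAlgebra.ι 𝕜 (z i : L) * UniversalEnvelopingAlgebra.ι 𝕜 (z j : L)) ⊗ₜ[𝕜]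
            (1 : WeylAlg 𝕜 (↥p × Module.Dual 𝕜 ↥p) (sympForm 𝕜 ↥p))) := by
    rw [e3, e1, e2, sub_add_eq_sub_sub]
    congr 1
    rw [← Finset.sum_sub_distrib]
    refine Finset.sum_congr rfl fun i _ => ?_
    rw [← Finset.sum_sub_distrib]
    refine Finset.sum_congr rfl fun j _ => ?_
    rw [← TensorProduct.sub_tmul, uea_comm (z i : L) (z j : L), add_sub_cancel_left]
  have hcoesum : ∀ (n : ιp → 𝕜) (v : ιp → ↥p), ((∑ j, n j • v j : ↥p) : L) = ∑ j, n j • (v j : L) := by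
    intro n v
    simp
  have hz'L : ∀ i, ((z' i : L)) = ∑ j, z.coord i (z' j) • ((z j : L)) := by
    intro i
    conv_lhs => rw [hexpz i]
    rw [hcoesum]
    exact Finset.sum_congr rfl fun j _ => by rw [csym]
  have innerT3 : ∀ i, (∑ j, z.coord i (z' j) • UniversalEnvelopingAlgebra.ι 𝕜 (z j : L)) = UniversalEnvelopingAlgebra.ι 𝕜 ((z' i : L)) := by
    intro i
    rw [hz'L i, uea_sum]
    exact Finset.sum_congr rfl fun j _ => by rw [uea_smul]
  have hT3 : ∑ i, ∑ j, z.coord i (z' j) •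
        ((UniversalEnvelopingAlgebra.ι 𝕜 (z i : L) * UniversalEnvelopingAlgebra.ι 𝕜 (z j : L)) ⊗ₜ[𝕜]
          (1 : WeylAlg 𝕜 (↥p × Module.Dual 𝕜 ↥p) (sympForm 𝕜 ↥p)))
      = (Ωg - Ωk) ⊗ₜ[𝕜] 1 := by
    have step : ∀ i, ∑ j, z.coord i (z' j) •
        ((UniversalEnvelopingAlgebra.ι 𝕜 (z i : L) * UniversalEnvelopingAlgebra.ι 𝕜 (z j : L)) ⊗ₜ[𝕜]
          (1 : WeylAlg 𝕜 (↥p × Module.Dual 𝕜 ↥p) (sympForm 𝕜 ↥p)))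
        = (UniversalEnvelopingAlgebra.ι 𝕜 (z i : L) * UniversalEnvelopingAlgebra.ι 𝕜 ((z' i : L))) ⊗ₜ[𝕜] 1 := by
      intro i
      simp_rw [TensorProduct.smul_tmul']
      rw [← TensorProduct.sum_tmul]
      congr 1
      rw [← innerT3 i, Finset.mul_sum]
      exact Finset.sum_congr rfl fun j _ => by rw [mul_smul_comm]
    simp_rw [step]
    have : ∀ i, UniversalEnvelopingAlgebra.ι 𝕜 (z i : L) * UniversalEnvelopingAlgebra.ι 𝕜 ((z' i : L))
        = UniversalEnvelopingAlgebra.ι 𝕜 ((z' i : L)) * UniversalEnvelopingAlgebra.ι 𝕜 ((z i : L)) + UniversalEnvelopingAlgebra.ι 𝕜 ⁅(z i : L), (z' i : L)⁆ :=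
      fun i => uea_comm _ _
    simp_rw [this, TensorProduct.add_tmul]
    rw [Finset.sum_add_distrib, ← TensorProduct.sum_tmul, ← TensorProduct.sum_tmul, ← uea_sum,
      zbr0, uea_zero, TensorProduct.zero_tmul, add_zero]
    congr 1
    rw [hΩg, hΩk, add_sub_cancel_left]
  -- coefficient identity
  have hcoeff : ∀ (l j : ιp) (m : ιk),
      B ⁅(z' l : L), (z j : L)⁆ ((w' m : L)) = - B ⁅(w' m : L), (z j : L)⁆ ((z' l : L)) := by
    intro l j m
    rw [hBinv, hBsymm ⁅(w' m : L), (z j : L)⁆ ((z' l : L)), ← lie_skew ((w' m : L)) ((z j : L)),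
      map_neg, neg_neg]
  have hexpand_kL : ∀ (x : L), x ∈ k → x = ∑ m, B x ((w' m : L)) • ((w m : L)) := by
    intro x hx
    have h := congrArg (Submodule.subtype k) (hexpand_k ⟨x, hx⟩)
    simpa using h
  have hwVecexp : ∀ (y : ↥p), wVec 𝕜 ↥p y = ∑ l, B (y : L) ((z' l : L)) • wVec 𝕜 ↥p (z l) := by
    intro y
    conv_lhs => rw [← wVecL_apply, hexpand_p y]
    rw [map_sum]
    exact Finset.sum_congr rfl fun l _ => by rw [map_smul, wVecL_apply]
  have s1 : ∀ i j, (UniversalEnvelopingAlgebra.ι 𝕜 ⁅(z i : L), (z j : L)⁆) ⊗ₜ[𝕜]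
        (wVec 𝕜 ↥p (z' i) * wDual 𝕜 ↥p (z.coord j))
      = ∑ l, B ((z' i : L)) ((z' l : L)) •
          ((UniversalEnvelopingAlgebra.ι 𝕜 ⁅(z i : L), (z j : L)⁆) ⊗ₜ[𝕜]
            (wVec 𝕜 ↥p (z l) * wDual 𝕜 ↥p (z.coord j))) := by
    intro i j
    rw [hwVecexp (z' i), Finset.sum_mul, TensorProduct.tmul_sum]
    exact Finset.sum_congr rfl fun l _ => by rw [smul_mul_assoc, TensorProduct.tmul_smul]
  have s2 : ∀ (l j : ιp), ∑ i, B ((z' i : L)) ((z' l : L)) •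
        UniversalEnvelopingAlgebra.ι 𝕜 ⁅(z i : L), (z j : L)⁆
      = UniversalEnvelopingAlgebra.ι 𝕜 ⁅(z' l : L), (z j : L)⁆ := by
    intro l j
    have hql : (z' l) = ∑ i, B ((z' i : L)) ((z' l : L)) • z i := by
      conv_lhs => rw [hexpand_p (z' l)]
      exact Finset.sum_congr rfl fun i _ => by rw [hBsymm]
    have hg := congrArg (fun (y : ↥p) => ((brP p p).flip (z j)) y) hql
    simp only [map_sum, map_smul, LinearMap.flip_apply, brP_apply] at hg
    rw [hg, uea_sum]
    exact Finset.sum_congr rfl fun i _ => by rw [uea_smul]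
  have hνexp : ∀ (m : ιk), (UniversalEnvelopingAlgebra.ι 𝕜 ((w m : L))) ⊗ₜ[𝕜] ν (w' m)
      = ∑ j, ∑ l, B ⁅(w' m : L), (z j : L)⁆ ((z' l : L)) •
          ((UniversalEnvelopingAlgebra.ι 𝕜 ((w m : L))) ⊗ₜ[𝕜]
            (wVec 𝕜 ↥p (z l) * wDual 𝕜 ↥p (z.coord j))) := by
    intro m
    rw [hν (w' m), TensorProduct.tmul_sum]
    refine Finset.sum_congr rfl fun j _ => ?_
    rw [hwVecexp ⟨⁅((w' m : ↥k) : L), ((z j : ↥p) : L)⁆, hkp _ (w' m).2 _ (z j).2⟩,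
      Finset.sum_mul, TensorProduct.tmul_sum]
    exact Finset.sum_congr rfl fun l _ => by rw [smul_mul_assoc, TensorProduct.tmul_smul]
  have hT1 : (∑ i, ∑ j, UniversalEnvelopingAlgebra.ι 𝕜 ⁅(z i : L), (z j : L)⁆ ⊗ₜ[𝕜]
        (wVec 𝕜 ↥p (z' i) * wDual 𝕜 ↥p (z.coord j)))
      = - ∑ m, UniversalEnvelopingAlgebra.ι 𝕜 ((w m : L)) ⊗ₜ[𝕜] ν (w' m) := by
    calc (∑ i, ∑ j, UniversalEnvelopingAlgebra.ι 𝕜 ⁅(z i : L), (z j : L)⁆ ⊗ₜ[𝕜]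
          (wVec 𝕜 ↥p (z' i) * wDual 𝕜 ↥p (z.coord j)))
        = ∑ i, ∑ j, ∑ l, B ((z' i : L)) ((z' l : L)) •
            ((UniversalEnvelopingAlgebra.ι 𝕜 ⁅(z i : L), (z j : L)⁆) ⊗ₜ[𝕜]
              (wVec 𝕜 ↥p (z l) * wDual 𝕜 ↥p (z.coord j))) :=
          Finset.sum_congr rfl fun i _ => Finset.sum_congr rfl fun j _ => s1 i j
      _ = ∑ l, ∑ j, ∑ i, B ((z' i : L)) ((z' l : L)) •
            ((UniversalEnvelopingAlgebra.ι 𝕜 ⁅(z i : L), (z j : L)⁆) ⊗ₜ[𝕜]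
              (wVec 𝕜 ↥p (z l) * wDual 𝕜 ↥p (z.coord j))) := sum3 _
      _ = ∑ l, ∑ j, (UniversalEnvelopingAlgebra.ι 𝕜 ⁅(z' l : L), (z j : L)⁆) ⊗ₜ[𝕜]
            (wVec 𝕜 ↥p (z l) * wDual 𝕜 ↥p (z.coord j)) := by
          refine Finset.sum_congr rfl fun l _ => Finset.sum_congr rfl fun j _ => ?_
          rw [← s2 l j, TensorProduct.sum_tmul]
          exact Finset.sum_congr rfl fun i _ => (TensorProduct.smul_tmul' _ _ _).symm
      _ = ∑ l, ∑ j, ∑ m, B ⁅(z' l : L), (z j : L)⁆ ((w' m : L)) •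
            ((UniversalEnvelopingAlgebra.ι 𝕜 ((w m : L))) ⊗ₜ[𝕜]
              (wVec 𝕜 ↥p (z l) * wDual 𝕜 ↥p (z.coord j))) := by
          refine Finset.sum_congr rfl fun l _ => Finset.sum_congr rfl fun j _ => ?_
          conv_lhs => rw [hexpand_kL ⁅(z' l : L), (z j : L)⁆ (hpp _ (z' l).2 _ (z j).2)]
          rw [uea_sum, TensorProduct.sum_tmul]
          refine Finset.sum_congr rfl fun m _ => ?_
          rw [uea_smul, ← TensorProduct.smul_tmul']
      _ = - ∑ m, ∑ j, ∑ l, B ⁅(w' m : L), (z j : L)⁆ ((z' l : L)) •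
            ((UniversalEnvelopingAlgebra.ι 𝕜 ((w m : L))) ⊗ₜ[𝕜]
              (wVec 𝕜 ↥p (z l) * wDual 𝕜 ↥p (z.coord j))) := by
          simp only [hcoeff]
          rw [sum3]
          simp only [← Finset.sum_neg_distrib]
          exact Finset.sum_congr rfl fun _ _ => Finset.sum_congr rfl fun _ _ =>
            Finset.sum_congr rfl fun _ _ => neg_smul (R := 𝕜) (M := UniversalEnvelopingAlgebra 𝕜 L ⊗[𝕜]
              WeylAlg 𝕜 (↥p × Module.Dual 𝕜 ↥p) (sympForm 𝕜 ↥p)) _ _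
      _ = - ∑ m, UniversalEnvelopingAlgebra.ι 𝕜 ((w m : L)) ⊗ₜ[𝕜] ν (w' m) := by
          rw [neg_inj]
          exact Finset.sum_congr rfl fun m _ => (hνexp m).symm
  have main1 : Dp * Dm - Dm * Dp
      = (-Ωg + Ωk) ⊗ₜ[𝕜] 1
        - ∑ j, UniversalEnvelopingAlgebra.ι 𝕜 (w j : L) ⊗ₜ[𝕜] ν (w' j) := by
    rw [mainsplit, hT3, hT1]
    have h : (-Ωg + Ωk) = -(Ωg - Ωk) := by abel
    rw [h, TensorProduct.neg_tmul]
    abel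
  -- ### Part 2
  have hνL : ∀ x : ↥k, ν x = nuL hkp z x := fun x => by rw [hν, nuL_apply]
  have hKK : ∑ m, UniversalEnvelopingAlgebra.ι 𝕜 ((w m : L)) *
      UniversalEnvelopingAlgebra.ι 𝕜 ((w' m : L)) = Ωk := by
    have h : ∀ m : ιk, UniversalEnvelopingAlgebra.ι 𝕜 ((w m : L)) *
        UniversalEnvelopingAlgebra.ι 𝕜 ((w' m : L))
        = UniversalEnvelopingAlgebra.ι 𝕜 ((w' m : L)) *
            UniversalEnvelopingAlgebra.ι 𝕜 ((w m : L))
          + UniversalEnvelopingAlgebra.ι 𝕜 ⁅(w m : L), (w' m : L)⁆ := fun m => uea_comm _ _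
    simp_rw [h]
    rw [Finset.sum_add_distrib, ← uea_sum, wbr0, uea_zero, add_zero, hΩk]
  have hswap : ∑ m, UniversalEnvelopingAlgebra.ι 𝕜 ((w' m : L)) ⊗ₜ[𝕜] ν (w m)
      = ∑ m, UniversalEnvelopingAlgebra.ι 𝕜 ((w m : L)) ⊗ₜ[𝕜] ν (w' m) := by
    letI : LieRing (UniversalEnvelopingAlgebra 𝕜 L) := LieRing.ofAssociativeRing
    have hg := symsum (R := 𝕜) (w : ιk → ↥k) w' (fun i l => w.coord l (w' i))
      (fun i => by exact hexpw i) (fun i l => csymw l i)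
      ((TensorProduct.mk 𝕜 (UniversalEnvelopingAlgebra 𝕜 L)
          (WeylAlg 𝕜 (↥p × Module.Dual 𝕜 ↥p) (sympForm 𝕜 ↥p))).compl₁₂
        ((UniversalEnvelopingAlgebra.ι 𝕜).toLinearMap ∘ₗ k.subtype) (nuL hkp z))
    simp only [LinearMap.compl₁₂_apply, TensorProduct.mk_apply, LinearMap.comp_apply,
      LieHom.coe_toLinearMap, Submodule.coe_subtype] at hg
    simp_rw [hνL]
    exact hg.symm
  have hΔexp : ΔΩk = Ωk ⊗ₜ[𝕜] 1
      + (∑ m, UniversalEnvelopingAlgebra.ι 𝕜 ((w m : L)) ⊗ₜ[𝕜] ν (w' m))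
      + (∑ m, UniversalEnvelopingAlgebra.ι 𝕜 ((w m : L)) ⊗ₜ[𝕜] ν (w' m))
      + (1 : UniversalEnvelopingAlgebra 𝕜 L) ⊗ₜ[𝕜] νΩk := by
    rw [hΔΩk]
    have h : ∀ m : ιk, Δ (w m) * Δ (w' m)
        = (UniversalEnvelopingAlgebra.ι 𝕜 ((w m : L)) *
            UniversalEnvelopingAlgebra.ι 𝕜 ((w' m : L))) ⊗ₜ[𝕜] 1
          + UniversalEnvelopingAlgebra.ι 𝕜 ((w m : L)) ⊗ₜ[𝕜] ν (w' m)
          + UniversalEnvelopingAlgebra.ι 𝕜 ((w' m : L)) ⊗ₜ[𝕜] ν (w m)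
          + (1 : UniversalEnvelopingAlgebra 𝕜 L) ⊗ₜ[𝕜] (ν (w m) * ν (w' m)) := by
      intro m
      rw [hΔ (w m), hΔ (w' m)]
      simp only [add_mul, mul_add, Algebra.TensorProduct.tmul_mul_tmul, one_mul, mul_one]
      abel
    simp_rw [h]
    rw [Finset.sum_add_distrib, Finset.sum_add_distrib, Finset.sum_add_distrib,
      ← TensorProduct.sum_tmul, hKK, hswap, ← TensorProduct.tmul_sum, ← hνΩk]
  refine ⟨main1, ?_⟩
  rw [main1, hΔexp]
  rw [TensorProduct.add_tmul, TensorProduct.add_tmul, TensorProduct.neg_tmul,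
    ← TensorProduct.smul_tmul']
  module
end
end

section
/- In the setting below, for every x ∈ M(σ)⊗1 ⊂ M⊗𝒫 one has ⟨D⁺x, D⁺x⟩_{M⊗𝒫} = (−χ + σ(Ω(k)))·⟨x,x⟩_{M⊗𝒫}. Consequently, if the hermitian form on M is positive definite and M(σ) ≠ 0, then χ ≤ σ(Ω(k)). -/
noncomputable section

open scoped TensorProduct ComplexOrder

attribute [local instance 100] LieRing.ofAssociativeRing

section Statement5

variable (L : Type*) [LieRing L] [LieAlgebra ℂ L] [FiniteDimensional ℂ L]


private lemma nonneg_of_mul_nonneg_of_pos {a b : ℂ} (h : 0 ≤ a * b) (hb : 0 < b) :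
    0 ≤ a := by
  rw [Complex.lt_def] at hb
  rw [Complex.le_def] at h ⊢
  simp only [Complex.zero_re, Complex.zero_im, Complex.mul_re, Complex.mul_im] at h ⊢
  have hbim : b.im = 0 := hb.2.symm
  have hbre : 0 < b.re := hb.1
  rw [hbim] at h
  simp only [mul_zero, sub_zero, zero_add] at h
  have haim : a.im = 0 := by
    rcases mul_eq_zero.mp h.2.symm with h' | h'
    · exact h'
    · exact absurd h' hbre.ne'
  refine ⟨?_, haim.symm⟩
  have hcalc : a.re = a.re * b.re / b.re := by field_simp
  rw [hcalc]
  exact div_nonneg h.1 hbre.le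

/-- For every `x ∈ M(σ)⊗1`,
`⟨D⁺x,D⁺x⟩ = (−χ + σ(Ω(k)))⟨x,x⟩`; consequently if the form on `M` is positive
definite and `M(σ) ≠ 0` then `χ ≤ σ(Ω(k))`. -/
theorem statement5
    -- `g = k ⊕ p`, a quadratic Lie algebra which is the complexification of a real
    -- Lie algebra `g₀ = k₀ ⊕ p₀`; `cj` is the complex conjugation fixing `g₀`
    (cj : L → L)
    (hcj_add : ∀ x y, cj (x + y) = cj x + cj y)
    (hcj_smul : ∀ (c : ℂ) (x : L), cj (c • x) = (starRingEnd ℂ c) • cj x)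
    (hcj_invol : ∀ x, cj (cj x) = x)
    (hcj_lie : ∀ x y, cj ⁅x, y⁆ = ⁅cj x, cj y⁆)
    (B : L →ₗ[ℂ] L →ₗ[ℂ] ℂ)
    (hBsymm : ∀ x y, B x y = B y x)
    (hBnondeg : ∀ x, (∀ y, B x y = 0) → x = 0)
    (hBinv : ∀ x y z, B ⁅x, y⁆ z = B x ⁅y, z⁆)
    (hBcj : ∀ x y, B (cj x) (cj y) = starRingEnd ℂ (B x y))
    (k p : Submodule ℂ L) (hcompl : IsCompl k p)
    (hkk : ∀ x ∈ k, ∀ y ∈ k, ⁅x, y⁆ ∈ k)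
    (hkp : ∀ x ∈ k, ∀ y ∈ p, ⁅x, y⁆ ∈ p)
    (hpp : ∀ x ∈ p, ∀ y ∈ p, ⁅x, y⁆ ∈ k)
    (horth : ∀ x ∈ k, ∀ y ∈ p, B x y = 0)
    (hcjk : ∀ x ∈ k, cj x ∈ k) (hcjp : ∀ x ∈ p, cj x ∈ p)
    (hBpos : ∀ x ∈ p, cj x = x → x ≠ 0 → 0 < B x x)
    -- a basis `{w_k}` of `k` with `B`-dual basis `{w^k}`
    (ιk : Type) [Fintype ιk] [DecidableEq ιk]
    (w : Module.Basis ιk ℂ ↥k) (w' : ιk → ↥k)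
    (hw : ∀ i j, B ((w i : L)) ((w' j : L)) = if i = j then 1 else 0)
    -- an orthonormal basis `{z_i}` of `(p₀, B)` (so `z^i = z_i`)
    (nn : ℕ) (z : Fin nn → L)
    (hzp : ∀ i, z i ∈ p) (hzreal : ∀ i, cj (z i) = z i)
    (hzortho : ∀ i j, B (z i) (z j) = if i = j then 1 else 0)
    (hzspan : Submodule.span ℂ (Set.range z) = p)
    -- `(π, M)`: a `g`-module with a hermitian form `⟨u·m,m'⟩ = ⟨m,u*·m'⟩`, `x* = −x̄`
    (M : Type*) [AddCommGroup M] [Module ℂ M]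
    (π : L →ₗ⁅ℂ⁆ Module.End ℂ M)
    (FM : M →ₛₗ[starRingEnd ℂ] M →ₗ[ℂ] ℂ)
    (hFMherm : ∀ m m', FM m m' = starRingEnd ℂ (FM m' m))
    (hFMinv : ∀ (x : L) (m m' : M), FM (π x m) m' = - FM m (π (cj x) m'))
    -- `Ω(g)` acts on `M` by the scalar `χ`
    (χ : ℂ)
    (hχ : (∑ j, π ((w' j : L)) * π ((w j : L))) + (∑ i, π (z i) * π (z i))
      = χ • (1 : Module.End ℂ M))
    -- `σ`: a simple finite-dimensional `k`-module on which `Ω(k)` acts by `σ(Ω(k))`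
    (σV : Type*) [AddCommGroup σV] [Module ℂ σV] [FiniteDimensional ℂ σV] [Nontrivial σV]
    (ρ : ↥k →ₗ[ℂ] Module.End ℂ σV)
    (hρlie : ∀ x y : ↥k, ρ ⟨⁅(x : L), (y : L)⁆, hkk _ x.2 _ y.2⟩ = ρ x * ρ y - ρ y * ρ x)
    (hsimple : ∀ N : Submodule ℂ σV, (∀ (x : ↥k), ∀ s ∈ N, ρ x s ∈ N) → N = ⊥ ∨ N = ⊤)
    (σΩ : ℂ)
    (hσΩ : (∑ j, ρ (w' j) * ρ (w j)) = σΩ • (1 : Module.End ℂ σV))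
    -- `M(σ)`: the `σ`-isotypic component of `M`
    (Mσ : Submodule ℂ M)
    (hMσ : Mσ = sSup {N : Submodule ℂ M | ∃ f : σV →ₗ[ℂ] M,
      (∀ (x : ↥k) (s : σV), f (ρ x s) = π (x : L) (f s)) ∧ N = LinearMap.range f})
    -- `𝒫 = S(p)`, realized as polynomials in the orthonormal basis `{z_i}`, with the
    -- hermitian inner product `⟨P₁,P₂⟩ = (∂_{P₂}(conj P₁))(0)`
    (FP : MvPolynomial (Fin nn) ℂ →ₛₗ[starRingEnd ℂ] MvPolynomial (Fin nn) ℂ →ₗ[ℂ] ℂ)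
    (hFP : ∀ (d d' : Fin nn →₀ ℕ) (c c' : ℂ),
      FP (MvPolynomial.monomial d c) (MvPolynomial.monomial d' c')
        = if d = d' then (∏ i, ((d i).factorial : ℂ)) * starRingEnd ℂ c * c' else 0)
    -- the product hermitian form on `M ⊗ 𝒫`
    (F : M ⊗[ℂ] MvPolynomial (Fin nn) ℂ →ₛₗ[starRingEnd ℂ]
      M ⊗[ℂ] MvPolynomial (Fin nn) ℂ →ₗ[ℂ] ℂ)
    (hF : ∀ (m m' : M) (q q' : MvPolynomial (Fin nn) ℂ),
      F (m ⊗ₜ[ℂ] q) (m' ⊗ₜ[ℂ] q') = FM m m' * FP q q')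
    -- the symplectic Dirac operators on `M ⊗ 𝒫`
    (Dp Dm : M ⊗[ℂ] MvPolynomial (Fin nn) ℂ →ₗ[ℂ] M ⊗[ℂ] MvPolynomial (Fin nn) ℂ)
    (hDp : Dp = ∑ i, TensorProduct.map (π (z i)) (LinearMap.mulLeft ℂ (MvPolynomial.X i)))
    (hDm : Dm = ∑ i, TensorProduct.map (π (z i)) (MvPolynomial.pderiv i).toLinearMap) :
    (∀ m ∈ Mσ,
      F (Dp (m ⊗ₜ[ℂ] 1)) (Dp (m ⊗ₜ[ℂ] 1))
        = (-χ + σΩ) * F (m ⊗ₜ[ℂ] 1) (m ⊗ₜ[ℂ] 1)) ∧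
    ((∀ m : M, m ≠ 0 → 0 < FM m m) → Mσ ≠ ⊥ → χ ≤ σΩ) := by
  classical
  have hX : ∀ i : Fin nn, (MvPolynomial.X i : MvPolynomial (Fin nn) ℂ)
      = MvPolynomial.monomial (Finsupp.single i 1) 1 := fun i => rfl
  have hFPXX : ∀ i j : Fin nn,
      FP (MvPolynomial.X i) (MvPolynomial.X j) = if i = j then 1 else 0 := by
    intro i j
    rw [hX, hX, hFP]
    by_cases h : i = j
    · subst h
      rw [if_pos rfl, if_pos rfl]
      have hprod : (∏ x, (((Finsupp.single i 1 : Fin nn →₀ ℕ) x).factorial : ℂ)) = 1 := by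
        refine Finset.prod_eq_one fun x _ => ?_
        by_cases hx : x = i
        · subst hx; simp
        · rw [Finsupp.single_eq_of_ne' (Ne.symm hx)]; simp
      rw [hprod]; simp
    · rw [if_neg h, if_neg]
      intro hc
      exact h ((Finsupp.single_left_inj one_ne_zero).mp hc)
  have hFP11 : FP (1 : MvPolynomial (Fin nn) ℂ) 1 = 1 := by
    have h1 : (1 : MvPolynomial (Fin nn) ℂ) = MvPolynomial.monomial 0 1 := by
      rw [← MvPolynomial.C_1, MvPolynomial.C_apply]
    rw [h1, hFP]
    simp
  have hDpx : ∀ m : M, Dp (m ⊗ₜ[ℂ] (1 : MvPolynomial (Fin nn) ℂ))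
      = ∑ i, (π (z i) m) ⊗ₜ[ℂ] MvPolynomial.X i := by
    intro m
    rw [hDp]
    simp [LinearMap.sum_apply, TensorProduct.map_tmul, LinearMap.mulLeft_apply]
  have hsum : ∀ m : M, F (Dp (m ⊗ₜ[ℂ] 1)) (Dp (m ⊗ₜ[ℂ] 1))
      = ∑ i, FM (π (z i) m) (π (z i) m) := by
    intro m
    rw [hDpx m]
    simp only [map_sum, LinearMap.sum_apply, hF, hFPXX, mul_ite, mul_one, mul_zero,
      Finset.sum_ite_eq, Finset.sum_ite_eq', Finset.mem_univ, if_true]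
  have hOmegaM : ∀ m ∈ Mσ, (∑ j, π ((w' j : L)) * π ((w j : L))) m = σΩ • m := by
    have hle : Mσ ≤ LinearMap.ker
        ((∑ j, π ((w' j : L)) * π ((w j : L))) - σΩ • (1 : Module.End ℂ M)) := by
      rw [hMσ]
      apply sSup_le
      rintro N ⟨f, hf, rfl⟩
      rintro x hx
      obtain ⟨s, rfl⟩ := hx
      simp only [LinearMap.mem_ker, LinearMap.sub_apply, LinearMap.smul_apply,
        Module.End.one_apply, LinearMap.sum_apply, Module.End.mul_apply]
      have step : ∀ j : ιk,
          π ((w' j : L)) (π ((w j : L)) (f s)) = f ((ρ (w' j) * ρ (w j)) s) := by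
        intro j
        rw [← hf (w j) s, ← hf (w' j)]
        rfl
      rw [Finset.sum_congr rfl (fun j _ => step j), ← map_sum, ← LinearMap.sum_apply, hσΩ]
      simp
    intro m hm
    have hk := hle hm
    rw [LinearMap.mem_ker, LinearMap.sub_apply, LinearMap.smul_apply,
      Module.End.one_apply, sub_eq_zero] at hk
    exact hk
  have hmain : ∀ m ∈ Mσ, F (Dp (m ⊗ₜ[ℂ] 1)) (Dp (m ⊗ₜ[ℂ] 1))
      = (-χ + σΩ) * F (m ⊗ₜ[ℂ] 1) (m ⊗ₜ[ℂ] 1) := by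
    intro m hm
    rw [hsum m, hF, hFP11, mul_one]
    have hS : (∑ i, π (z i) * π (z i)) m = χ • m - σΩ • m := by
      have h1 : (∑ i, π (z i) * π (z i))
          = χ • (1 : Module.End ℂ M) - (∑ j, π ((w' j : L)) * π ((w j : L))) :=
        eq_sub_of_add_eq' hχ
      rw [h1]
      simp only [LinearMap.sub_apply, LinearMap.smul_apply, Module.End.one_apply]
      rw [hOmegaM m hm]
    calc ∑ i, FM (π (z i) m) (π (z i) m)
        = ∑ i, - FM m (π (z i) (π (z i) m)) := by
          refine Finset.sum_congr rfl fun i _ => ?_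
          rw [hFMinv, hzreal]
      _ = - FM m ((∑ i, π (z i) * π (z i)) m) := by
          rw [LinearMap.sum_apply, map_sum, ← Finset.sum_neg_distrib]
          exact Finset.sum_congr rfl fun i _ => by rw [Module.End.mul_apply]
      _ = - FM m (χ • m - σΩ • m) := by rw [hS]
      _ = (-χ + σΩ) * FM m m := by
          simp only [map_sub, map_smul, smul_eq_mul]
          ring
  refine ⟨hmain, ?_⟩
  intro hpos hne
  obtain ⟨m, hm, hm0⟩ := Submodule.exists_mem_ne_zero_of_ne_bot hne
  have h1 := hmain m hm
  have hF11 : F (m ⊗ₜ[ℂ] (1 : MvPolynomial (Fin nn) ℂ)) (m ⊗ₜ[ℂ] 1) = FM m m := by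
    rw [hF, hFP11, mul_one]
  have h2 : 0 ≤ (-χ + σΩ) * FM m m := by
    rw [← hF11, ← h1, hsum m]
    refine Finset.sum_nonneg fun i _ => ?_
    by_cases h : π (z i) m = 0
    · simp [h]
    · exact (hpos _ h).le
  have h3 : 0 ≤ -χ + σΩ := nonneg_of_mul_nonneg_of_pos h2 (hpos m hm0)
  have h4 : 0 ≤ σΩ - χ := by rwa [neg_add_eq_sub] at h3
  exact sub_nonneg.mp h4


end Statement5

end
end

section
/- In the setting below, for every simple tensor x = m⊗p ∈ M(σ)⊗S(p₀) (m ∈ M(σ), p ∈ S(p₀)) one has ⟨D⁺x, D⁺x⟩_{M⊗𝒫} − ⟨D⁻x, D⁻x⟩_{M⊗𝒫} = (−χ + σ(Ω(k)))·⟨x,x⟩_{M⊗𝒫}. -/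
noncomputable section

open scoped TensorProduct ComplexOrder

open MvPolynomial

section Helpers

variable {nn : ℕ}

lemma prod_fact_add_single (d : Fin nn →₀ ℕ) (i : Fin nn) :
    (∏ k, ((((Finsupp.single i 1 + d : Fin nn →₀ ℕ)) k).factorial : ℂ))
      = ((d i : ℂ) + 1) * ∏ k, ((d k).factorial : ℂ) := by
  rw [← Finset.mul_prod_erase Finset.univ
        (fun k => ((((Finsupp.single i 1 + d : Fin nn →₀ ℕ)) k).factorial : ℂ))
        (Finset.mem_univ i),
      ← Finset.mul_prod_erase Finset.univ (fun k => ((d k).factorial : ℂ)) (Finset.mem_univ i)]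
  have h1 : ((Finsupp.single i 1 + d : Fin nn →₀ ℕ) i) = d i + 1 := by
    simp [Finsupp.add_apply, Finsupp.single_eq_same, add_comm]
  have h2 : ∀ k ∈ Finset.univ.erase i,
      ((((Finsupp.single i 1 + d : Fin nn →₀ ℕ)) k).factorial : ℂ) = ((d k).factorial : ℂ) := by
    intro k hk
    have hne : k ≠ i := (Finset.mem_erase.mp hk).1
    simp [Finsupp.add_apply, Finsupp.single_eq_of_ne hne]
  rw [Finset.prod_congr rfl h2, h1, Nat.factorial_succ]
  push_cast
  ring

variable (FP : MvPolynomial (Fin nn) ℂ →ₛₗ[starRingEnd ℂ] MvPolynomial (Fin nn) ℂ →ₗ[ℂ] ℂ)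
  (hFP : ∀ (d d' : Fin nn →₀ ℕ) (c c' : ℂ),
      FP (MvPolynomial.monomial d c) (MvPolynomial.monomial d' c')
        = if d = d' then (∏ i, ((d i).factorial : ℂ)) * starRingEnd ℂ c * c' else 0)

include hFP

lemma FP_keyA (i : Fin nn) (a b : MvPolynomial (Fin nn) ℂ) :
    FP (MvPolynomial.X i * a) b = FP a (MvPolynomial.pderiv i b) := by
  induction a using MvPolynomial.induction_on' with
  | add p q hp hq => rw [mul_add, map_add, map_add, LinearMap.add_apply, hp, hq, LinearMap.add_apply]
  | monomial d c =>
    induction b using MvPolynomial.induction_on' with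
    | add p q hp hq => rw [map_add, map_add, map_add, hp, hq]
    | monomial d' c' =>
      rw [show (MvPolynomial.X i : MvPolynomial (Fin nn) ℂ) * MvPolynomial.monomial d c
            = MvPolynomial.monomial (Finsupp.single i 1 + d) c by
          rw [monomial_single_add, pow_one]]
      rw [pderiv_monomial, hFP, hFP]
      by_cases h : Finsupp.single i 1 + d = d'
      · subst h
        have h1 : ((Finsupp.single i 1 + d : Fin nn →₀ ℕ) i) = d i + 1 := by
          simp [Finsupp.add_apply, Finsupp.single_eq_same, add_comm]
        rw [if_pos rfl, if_pos (add_tsub_cancel_left _ _).symm, prod_fact_add_single, h1]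
        push_cast
        ring
      · rw [if_neg h]
        by_cases h2 : d = d' - Finsupp.single i 1
        · rw [if_pos h2]
          have h3 : d' i = 0 := by
            by_contra hne
            have hle : Finsupp.single i 1 ≤ d' := Finsupp.single_le_iff.mpr (by omega)
            exact h (by rw [h2, add_comm, tsub_add_cancel_of_le hle])
          rw [h3]
          push_cast
          ring
        · rw [if_neg h2]

lemma FP_keyB (i : Fin nn) (a b : MvPolynomial (Fin nn) ℂ) :
    FP a (MvPolynomial.X i * b) = FP (MvPolynomial.pderiv i a) b := by
  induction b using MvPolynomial.induction_on' with
  | add p q hp hq => rw [mul_add, map_add, map_add, hp, hq]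
  | monomial d' c' =>
    induction a using MvPolynomial.induction_on' with
    | add p q hp hq => rw [map_add, LinearMap.add_apply, hp, hq, map_add, map_add,
        LinearMap.add_apply]
    | monomial d c =>
      rw [show (MvPolynomial.X i : MvPolynomial (Fin nn) ℂ) * MvPolynomial.monomial d' c'
            = MvPolynomial.monomial (Finsupp.single i 1 + d') c' by
          rw [monomial_single_add, pow_one]]
      rw [pderiv_monomial, hFP, hFP]
      by_cases h : d = Finsupp.single i 1 + d'
      · subst h
        have h1 : ((Finsupp.single i 1 + d' : Fin nn →₀ ℕ) i) = d' i + 1 := by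
          simp [Finsupp.add_apply, Finsupp.single_eq_same, add_comm]
        have e : (Finsupp.single i 1 + d' - Finsupp.single i 1 : Fin nn →₀ ℕ) = d' :=
          add_tsub_cancel_left _ _
        rw [e, if_pos rfl, if_pos rfl, prod_fact_add_single, h1, map_mul, map_natCast]
        push_cast
        ring
      · rw [if_neg h]
        by_cases h2 : d - Finsupp.single i 1 = d'
        · rw [if_pos h2]
          have h3 : d i = 0 := by
            by_contra hne
            have hle : Finsupp.single i 1 ≤ d := Finsupp.single_le_iff.mpr (by omega)
            exact h (by rw [← h2, add_comm, tsub_add_cancel_of_le hle])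
          rw [h3]
          simp
        · rw [if_neg h2]

lemma FP_expand (a b : MvPolynomial (Fin nn) ℂ) :
    FP a b = ∑ d ∈ a.support, ∑ d' ∈ b.support,
      if d = d' then (∏ k, ((d k).factorial : ℂ))
        * starRingEnd ℂ (MvPolynomial.coeff d a) * MvPolynomial.coeff d' b else 0 := by
  conv_lhs => rw [a.as_sum, b.as_sum]
  simp only [map_sum, LinearMap.sum_apply, hFP]
  rw [Finset.sum_comm]

lemma FP_symm (a b : MvPolynomial (Fin nn) ℂ)
    (ha : ∀ d, starRingEnd ℂ (MvPolynomial.coeff d a) = MvPolynomial.coeff d a)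
    (hb : ∀ d, starRingEnd ℂ (MvPolynomial.coeff d b) = MvPolynomial.coeff d b) :
    FP a b = FP b a := by
  rw [FP_expand FP hFP, FP_expand FP hFP, Finset.sum_comm]
  refine Finset.sum_congr rfl fun d _ => Finset.sum_congr rfl fun d' _ => ?_
  by_cases h : d = d'
  · subst h
    rw [if_pos rfl, if_pos rfl, ha, hb]
    ring
  · rw [if_neg h, if_neg (Ne.symm h)]

omit hFP

lemma coeff_pderiv' (i : Fin nn) (q : MvPolynomial (Fin nn) ℂ) (d : Fin nn →₀ ℕ) :
    MvPolynomial.coeff d (MvPolynomial.pderiv i q)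
      = ((d i : ℂ) + 1) * MvPolynomial.coeff (d + Finsupp.single i 1) q := by
  induction q using MvPolynomial.induction_on' with
  | add p q hp hq => rw [map_add, MvPolynomial.coeff_add, MvPolynomial.coeff_add, hp, hq]; ring
  | monomial s a =>
    rw [pderiv_monomial, MvPolynomial.coeff_monomial, MvPolynomial.coeff_monomial]
    by_cases h : s = d + Finsupp.single i 1
    · subst h
      rw [if_pos (add_tsub_cancel_right _ _), if_pos rfl]
      have h1 : ((d + Finsupp.single i 1 : Fin nn →₀ ℕ) i) = d i + 1 := by
        simp [Finsupp.add_apply, Finsupp.single_eq_same]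
      rw [h1]
      push_cast
      ring
    · rw [if_neg h]
      by_cases h2 : s - Finsupp.single i 1 = d
      · rw [if_pos h2]
        have h3 : s i = 0 := by
          by_contra hne
          have hle : Finsupp.single i 1 ≤ s := Finsupp.single_le_iff.mpr (by omega)
          exact h (by rw [← h2, tsub_add_cancel_of_le hle])
        rw [h3]
        push_cast
        ring
      · rw [if_neg h2, mul_zero]

end Helpers

attribute [local instance 100] LieRing.ofAssociativeRing


section Statement6

variable (L : Type*) [LieRing L] [LieAlgebra ℂ L] [FiniteDimensional ℂ L]

/-- For every simple tensor `x = m ⊗ p` with `m ∈ M(σ)` and `p ∈ S(p₀)`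
(a polynomial with real coefficients),
`⟨D⁺x,D⁺x⟩ − ⟨D⁻x,D⁻x⟩ = (−χ + σ(Ω(k)))⟨x,x⟩`. -/
theorem statement6
    -- `g = k ⊕ p`, a quadratic Lie algebra which is the complexification of a real
    -- Lie algebra `g₀ = k₀ ⊕ p₀`; `cj` is the complex conjugation fixing `g₀`
    (cj : L → L)
    (hcj_add : ∀ x y, cj (x + y) = cj x + cj y)
    (hcj_smul : ∀ (c : ℂ) (x : L), cj (c • x) = (starRingEnd ℂ c) • cj x)
    (hcj_invol : ∀ x, cj (cj x) = x)
    (hcj_lie : ∀ x y, cj ⁅x, y⁆ = ⁅cj x, cj y⁆)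
    (B : L →ₗ[ℂ] L →ₗ[ℂ] ℂ)
    (hBsymm : ∀ x y, B x y = B y x)
    (hBnondeg : ∀ x, (∀ y, B x y = 0) → x = 0)
    (hBinv : ∀ x y z, B ⁅x, y⁆ z = B x ⁅y, z⁆)
    (hBcj : ∀ x y, B (cj x) (cj y) = starRingEnd ℂ (B x y))
    (k p : Submodule ℂ L) (hcompl : IsCompl k p)
    (hkk : ∀ x ∈ k, ∀ y ∈ k, ⁅x, y⁆ ∈ k)
    (hkp : ∀ x ∈ k, ∀ y ∈ p, ⁅x, y⁆ ∈ p)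
    (hpp : ∀ x ∈ p, ∀ y ∈ p, ⁅x, y⁆ ∈ k)
    (horth : ∀ x ∈ k, ∀ y ∈ p, B x y = 0)
    (hcjk : ∀ x ∈ k, cj x ∈ k) (hcjp : ∀ x ∈ p, cj x ∈ p)
    (hBpos : ∀ x ∈ p, cj x = x → x ≠ 0 → 0 < B x x)
    -- a basis `{w_k}` of `k` with `B`-dual basis `{w^k}`
    (ιk : Type) [Fintype ιk] [DecidableEq ιk]
    (w : Module.Basis ιk ℂ ↥k) (w' : ιk → ↥k)
    (hw : ∀ i j, B ((w i : L)) ((w' j : L)) = if i = j then 1 else 0)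
    -- an orthonormal basis `{z_i}` of `(p₀, B)` (so `z^i = z_i`)
    (nn : ℕ) (z : Fin nn → L)
    (hzp : ∀ i, z i ∈ p) (hzreal : ∀ i, cj (z i) = z i)
    (hzortho : ∀ i j, B (z i) (z j) = if i = j then 1 else 0)
    (hzspan : Submodule.span ℂ (Set.range z) = p)
    -- `(π, M)`: a `g`-module with a hermitian form `⟨u·m,m'⟩ = ⟨m,u*·m'⟩`, `x* = −x̄`
    (M : Type*) [AddCommGroup M] [Module ℂ M]
    (π : L →ₗ⁅ℂ⁆ Module.End ℂ M)
    (FM : M →ₛₗ[starRingEnd ℂ] M →ₗ[ℂ] ℂ)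
    (hFMherm : ∀ m m', FM m m' = starRingEnd ℂ (FM m' m))
    (hFMinv : ∀ (x : L) (m m' : M), FM (π x m) m' = - FM m (π (cj x) m'))
    -- `Ω(g)` acts on `M` by the scalar `χ`
    (χ : ℂ)
    (hχ : (∑ j, π ((w' j : L)) * π ((w j : L))) + (∑ i, π (z i) * π (z i))
      = χ • (1 : Module.End ℂ M))
    -- `σ`: a simple finite-dimensional `k`-module on which `Ω(k)` acts by `σ(Ω(k))`
    (σV : Type*) [AddCommGroup σV] [Module ℂ σV] [FiniteDimensional ℂ σV] [Nontrivial σV]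
    (ρ : ↥k →ₗ[ℂ] Module.End ℂ σV)
    (hρlie : ∀ x y : ↥k, ρ ⟨⁅(x : L), (y : L)⁆, hkk _ x.2 _ y.2⟩ = ρ x * ρ y - ρ y * ρ x)
    (hsimple : ∀ N : Submodule ℂ σV, (∀ (x : ↥k), ∀ s ∈ N, ρ x s ∈ N) → N = ⊥ ∨ N = ⊤)
    (σΩ : ℂ)
    (hσΩ : (∑ j, ρ (w' j) * ρ (w j)) = σΩ • (1 : Module.End ℂ σV))
    -- `M(σ)`: the `σ`-isotypic component of `M`
    (Mσ : Submodule ℂ M)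
    (hMσ : Mσ = sSup {N : Submodule ℂ M | ∃ f : σV →ₗ[ℂ] M,
      (∀ (x : ↥k) (s : σV), f (ρ x s) = π (x : L) (f s)) ∧ N = LinearMap.range f})
    -- `𝒫 = S(p)`, realized as polynomials in the orthonormal basis `{z_i}`, with the
    -- hermitian inner product `⟨P₁,P₂⟩ = (∂_{P₂}(conj P₁))(0)`
    (FP : MvPolynomial (Fin nn) ℂ →ₛₗ[starRingEnd ℂ] MvPolynomial (Fin nn) ℂ →ₗ[ℂ] ℂ)
    (hFP : ∀ (d d' : Fin nn →₀ ℕ) (c c' : ℂ),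
      FP (MvPolynomial.monomial d c) (MvPolynomial.monomial d' c')
        = if d = d' then (∏ i, ((d i).factorial : ℂ)) * starRingEnd ℂ c * c' else 0)
    -- the product hermitian form on `M ⊗ 𝒫`
    (F : M ⊗[ℂ] MvPolynomial (Fin nn) ℂ →ₛₗ[starRingEnd ℂ]
      M ⊗[ℂ] MvPolynomial (Fin nn) ℂ →ₗ[ℂ] ℂ)
    (hF : ∀ (m m' : M) (q q' : MvPolynomial (Fin nn) ℂ),
      F (m ⊗ₜ[ℂ] q) (m' ⊗ₜ[ℂ] q') = FM m m' * FP q q')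
    -- the symplectic Dirac operators on `M ⊗ 𝒫`
    (Dp Dm : M ⊗[ℂ] MvPolynomial (Fin nn) ℂ →ₗ[ℂ] M ⊗[ℂ] MvPolynomial (Fin nn) ℂ)
    (hDp : Dp = ∑ i, TensorProduct.map (π (z i)) (LinearMap.mulLeft ℂ (MvPolynomial.X i)))
    (hDm : Dm = ∑ i, TensorProduct.map (π (z i)) (MvPolynomial.pderiv i).toLinearMap) :
    ∀ m ∈ Mσ, ∀ q : MvPolynomial (Fin nn) ℂ,
      (∀ d, starRingEnd ℂ (MvPolynomial.coeff d q) = MvPolynomial.coeff d q) →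
      F (Dp (m ⊗ₜ[ℂ] q)) (Dp (m ⊗ₜ[ℂ] q)) - F (Dm (m ⊗ₜ[ℂ] q)) (Dm (m ⊗ₜ[ℂ] q))
        = (-χ + σΩ) * F (m ⊗ₜ[ℂ] q) (m ⊗ₜ[ℂ] q) := by
  intro m hm q hq
  classical
  have hq' : ∀ (i : Fin nn) (d : Fin nn →₀ ℕ),
      starRingEnd ℂ (MvPolynomial.coeff d (MvPolynomial.pderiv i q))
        = MvPolynomial.coeff d (MvPolynomial.pderiv i q) := by
    intro i d
    rw [coeff_pderiv', map_mul, hq]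
    congr 1
    simp
  have hOm : (∑ j, π ((w' j : L)) (π ((w j : L)) m)) = σΩ • m := by
    have hle : Mσ ≤ LinearMap.ker
        ((∑ j, π ((w' j : L)) * π ((w j : L))) - σΩ • (1 : Module.End ℂ M)) := by
      rw [hMσ]
      apply sSup_le
      rintro N ⟨f, hf, rfl⟩
      rintro x hx
      obtain ⟨s, rfl⟩ := hx
      rw [LinearMap.mem_ker]
      have h2 := DFunLike.congr_fun hσΩ s
      simp only [LinearMap.sum_apply, Module.End.mul_apply, LinearMap.smul_apply,
        Module.End.one_apply] at h2
      simp only [LinearMap.sub_apply, LinearMap.sum_apply, Module.End.mul_apply,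
        LinearMap.smul_apply, Module.End.one_apply]
      have h1 : ∀ j, π ((w' j : L)) (π ((w j : L)) (f s)) = f (ρ (w' j) (ρ (w j) s)) := by
        intro j
        rw [← hf (w j) s, ← hf (w' j) (ρ (w j) s)]
      simp only [h1]
      rw [← map_sum, h2, map_smul, sub_self]
    have h := hle hm
    rw [LinearMap.mem_ker, LinearMap.sub_apply, LinearMap.sum_apply, LinearMap.smul_apply,
      Module.End.one_apply, sub_eq_zero] at h
    simpa only [Module.End.mul_apply] using h
  have e1 : Dp (m ⊗ₜ[ℂ] q) = ∑ i, (π (z i) m) ⊗ₜ[ℂ] (MvPolynomial.X i * q) := by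
    rw [hDp, LinearMap.sum_apply]
    exact Finset.sum_congr rfl fun i _ => by
      rw [TensorProduct.map_tmul, LinearMap.mulLeft_apply]
  have e2 : Dm (m ⊗ₜ[ℂ] q) = ∑ i, (π (z i) m) ⊗ₜ[ℂ] (MvPolynomial.pderiv i q) := by
    rw [hDm, LinearMap.sum_apply]
    exact Finset.sum_congr rfl fun i _ => by
      rw [TensorProduct.map_tmul]; rfl
  have eF : ∀ (u v : Fin nn → M) (r s : Fin nn → MvPolynomial (Fin nn) ℂ),
      F (∑ i, u i ⊗ₜ[ℂ] r i) (∑ j, v j ⊗ₜ[ℂ] s j)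
        = ∑ i, ∑ j, FM (u i) (v j) * FP (r i) (s j) := by
    intro u v r s
    rw [map_sum F, LinearMap.sum_apply]
    refine Finset.sum_congr rfl fun i _ => ?_
    rw [map_sum (F (u i ⊗ₜ[ℂ] r i))]
    exact Finset.sum_congr rfl fun j _ => hF (u i) (v j) (r i) (s j)
  have key : ∀ i j : Fin nn,
      FP (MvPolynomial.X i * q) (MvPolynomial.X j * q)
        - FP (MvPolynomial.pderiv i q) (MvPolynomial.pderiv j q)
        = if i = j then FP q q else 0 := by
    intro i j
    by_cases hij : i = j
    · subst hij
      rw [if_pos rfl, FP_keyA FP hFP, MvPolynomial.pderiv_mul, MvPolynomial.pderiv_X_self,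
        one_mul, map_add, FP_keyB FP hFP]
      ring
    · rw [if_neg hij, FP_keyA FP hFP, MvPolynomial.pderiv_mul,
        MvPolynomial.pderiv_X_of_ne (Ne.symm hij), zero_mul, zero_add, FP_keyB FP hFP,
        FP_symm FP hFP _ _ (hq' j) (hq' i), sub_self]
  rw [e1, e2, eF, eF, ← Finset.sum_sub_distrib]
  have inner : ∀ i : Fin nn,
      ((∑ j, FM (π (z i) m) (π (z j) m) * FP (MvPolynomial.X i * q) (MvPolynomial.X j * q))
        - ∑ j, FM (π (z i) m) (π (z j) m)
            * FP (MvPolynomial.pderiv i q) (MvPolynomial.pderiv j q))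
        = FM (π (z i) m) (π (z i) m) * FP q q := by
    intro i
    rw [← Finset.sum_sub_distrib]
    have hterm : ∀ j : Fin nn,
        FM (π (z i) m) (π (z j) m) * FP (MvPolynomial.X i * q) (MvPolynomial.X j * q)
          - FM (π (z i) m) (π (z j) m)
              * FP (MvPolynomial.pderiv i q) (MvPolynomial.pderiv j q)
          = if i = j then FM (π (z i) m) (π (z j) m) * FP q q else 0 := by
      intro j
      rw [← mul_sub, key i j]
      by_cases hij : i = j
      · simp [hij]
      · simp [hij]
    rw [Finset.sum_congr rfl fun j _ => hterm j, Finset.sum_ite_eq]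
    simp
  rw [Finset.sum_congr rfl fun i _ => inner i, ← Finset.sum_mul]
  have e3 : ∀ i : Fin nn, FM (π (z i) m) (π (z i) m) = - FM m (π (z i) (π (z i) m)) := by
    intro i
    rw [hFMinv (z i) m (π (z i) m), hzreal i]
  have e4 : (∑ i, FM (π (z i) m) (π (z i) m)) = (-χ + σΩ) * FM m m := by
    have hz2 : (∑ i, π (z i) (π (z i) m)) = χ • m - σΩ • m := by
      have h := DFunLike.congr_fun hχ m
      simp only [LinearMap.add_apply, LinearMap.sum_apply, Module.End.mul_apply,
        LinearMap.smul_apply, Module.End.one_apply] at h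
      rw [eq_sub_iff_add_eq, ← hOm, add_comm]
      exact h
    calc (∑ i, FM (π (z i) m) (π (z i) m))
        = ∑ i, - FM m (π (z i) (π (z i) m)) := Finset.sum_congr rfl fun i _ => e3 i
      _ = - FM m (∑ i, π (z i) (π (z i) m)) := by
          rw [Finset.sum_neg_distrib, ← map_sum]
      _ = - FM m (χ • m - σΩ • m) := by rw [hz2]
      _ = (-χ + σΩ) * FM m m := by
          rw [map_sub, map_smul, map_smul]
          simp only [smul_eq_mul]
          ring
  rw [e4, hF m m q q]
  ring

end Statement6

end
end

section
/- Let n ≥ 1 and let V_n be the (n+1)-dimensional complex vector space with basis W_0,…,W_n. Define linear operators π(X)W_k = (n−k)W_{k+1} and π(Y)W_k = k·W_{k−1} (with W_{−1} = W_{n+1} = 0). On V_n⊗ℂ[X,Y] define D⁺ = 2π(X)⊗M_Y + 2π(Y)⊗M_X, where M_X, M_Y denote multiplication by X, Y. If n is odd, then D⁺ is injective. -/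
noncomputable section

open scoped TensorProduct

section Statement8

variable (n : ℕ)

/-- The `(n+1)`-dimensional module `V_n` of `sl(2,ℂ)`, with basis `W_0, …, W_n`
given by `W_k = Pi.single k 1`. -/
abbrev Vfd := Fin (n + 1) → ℂ

/-- `ℂ[X,Y]`, with `X = MvPolynomial.X 0` and `Y = MvPolynomial.X 1`. -/
abbrev PolyXY := MvPolynomial (Fin 2) ℂ

/-- Multiplication by `X`. -/
def mulX : PolyXY →ₗ[ℂ] PolyXY := LinearMap.mulLeft ℂ (MvPolynomial.X 0)

/-- Multiplication by `Y`. -/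
def mulY : PolyXY →ₗ[ℂ] PolyXY := LinearMap.mulLeft ℂ (MvPolynomial.X 1)

/- ### Auxiliary machinery -/

lemma coeffYmul (i m : ℕ) (p : PolyXY) :
    MvPolynomial.coeff (Finsupp.single (0:Fin 2) i + Finsupp.single 1 m) (MvPolynomial.X 1 * p)
      = if 1 ≤ m then
          MvPolynomial.coeff (Finsupp.single (0:Fin 2) i + Finsupp.single 1 (m-1)) p else 0 := by
  cases m with
  | zero =>
      rw [MvPolynomial.coeff_X_mul']
      simp [Finsupp.mem_support_iff, Finsupp.single_apply]
  | succ m' =>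
      have h : Finsupp.single (0:Fin 2) i + Finsupp.single 1 (m' + 1)
          = Finsupp.single (1:Fin 2) 1 + (Finsupp.single (0:Fin 2) i + Finsupp.single 1 m') := by
        rw [Finsupp.single_add]; abel
      rw [h, MvPolynomial.coeff_X_mul]
      simp

lemma coeffXmul (i m : ℕ) (p : PolyXY) :
    MvPolynomial.coeff (Finsupp.single (0:Fin 2) i + Finsupp.single 1 m) (MvPolynomial.X 0 * p)
      = if 1 ≤ i then
          MvPolynomial.coeff (Finsupp.single (0:Fin 2) (i-1) + Finsupp.single 1 m) p else 0 := by
  cases i with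
  | zero =>
      rw [MvPolynomial.coeff_X_mul']
      simp [Finsupp.mem_support_iff, Finsupp.single_apply]
  | succ i' =>
      have h : Finsupp.single (0:Fin 2) (i' + 1) + Finsupp.single 1 m
          = Finsupp.single (0:Fin 2) 1 + (Finsupp.single (0:Fin 2) i' + Finsupp.single 1 m) := by
        rw [Finsupp.single_add]; abel
      rw [h, MvPolynomial.coeff_X_mul]
      simp

lemma chainOdd (c : ℕ → ℕ → ℕ → ℂ)
    (hE : ∀ j, j ≤ n → ∀ i m : ℕ,
      (if 1 ≤ j ∧ 1 ≤ m then ((2*(n - (j-1)) : ℕ) : ℂ) * c (j-1) i (m-1) else 0)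
      + (if 1 ≤ i then ((2*(j+1) : ℕ) : ℂ) * c (j+1) (i-1) m else 0) = 0) :
    ∀ q k p, k ≤ n → Odd k → c k p q = 0 := by
  intro q
  induction q with
  | zero =>
      intro k p hk hko
      have hk1 : 1 ≤ k := hko.pos
      have h := hE (k-1) (by omega) (p+1) 0
      rw [if_neg (show ¬(1 ≤ k-1 ∧ 1 ≤ 0) by omega),
        if_pos (show 1 ≤ p+1 by omega), zero_add,
        show k - 1 + 1 = k by omega, Nat.add_sub_cancel] at h
      exact (mul_eq_zero.mp h).resolve_left (Nat.cast_ne_zero.mpr (by omega))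
  | succ q ih =>
      intro k p hk hko
      have hk1 : 1 ≤ k := hko.pos
      by_cases hk2 : 2 ≤ k
      · have h := hE (k-1) (by omega) (p+1) (q+1)
        rw [if_pos (show 1 ≤ k-1 ∧ 1 ≤ q+1 by omega),
          if_pos (show 1 ≤ p+1 by omega),
          show k - 1 + 1 = k by omega] at h
        simp only [Nat.add_sub_cancel] at h
        have hodd2 : Odd (k - 1 - 1) := by
          rcases hko with ⟨t, ht⟩; exact ⟨t - 1, by omega⟩
        rw [ih (k-1-1) (p+1) (by omega) hodd2, mul_zero, zero_add] at h
        exact (mul_eq_zero.mp h).resolve_left (Nat.cast_ne_zero.mpr (by omega))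
      · have h := hE (k-1) (by omega) (p+1) (q+1)
        rw [if_neg (show ¬(1 ≤ k-1 ∧ 1 ≤ q+1) by omega),
          if_pos (show 1 ≤ p+1 by omega), zero_add,
          show k - 1 + 1 = k by omega, Nat.add_sub_cancel] at h
        exact (mul_eq_zero.mp h).resolve_left (Nat.cast_ne_zero.mpr (by omega))

lemma chainEven (hodd : Odd n) (c : ℕ → ℕ → ℕ → ℂ)
    (hE : ∀ j, j ≤ n → ∀ i m : ℕ,
      (if 1 ≤ j ∧ 1 ≤ m then ((2*(n - (j-1)) : ℕ) : ℂ) * c (j-1) i (m-1) else 0)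
      + (if 1 ≤ i then ((2*(j+1) : ℕ) : ℂ) * c (j+1) (i-1) m else 0) = 0)
    (hhigh : ∀ k p q, n < k → c k p q = 0) :
    ∀ p k q, k ≤ n → Even k → c k p q = 0 := by
  intro p
  induction p with
  | zero =>
      intro k q hk hke
      have hkn : k < n := by
        rcases hodd with ⟨t, ht⟩; rcases hke with ⟨s, hs⟩; omega
      have h := hE (k+1) (by omega) 0 (q+1)
      rw [if_pos (show 1 ≤ k+1 ∧ 1 ≤ q+1 by omega),
        if_neg (show ¬(1 ≤ 0) by omega), add_zero] at h
      simp only [Nat.add_sub_cancel] at h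
      exact (mul_eq_zero.mp h).resolve_left (Nat.cast_ne_zero.mpr (by omega))
  | succ p ih =>
      intro k q hk hke
      have hkn : k < n := by
        rcases hodd with ⟨t, ht⟩; rcases hke with ⟨s, hs⟩; omega
      have h := hE (k+1) (by omega) (p+1) (q+1)
      rw [if_pos (show 1 ≤ k+1 ∧ 1 ≤ q+1 by omega),
        if_pos (show 1 ≤ p+1 by omega)] at h
      simp only [Nat.add_sub_cancel] at h
      have hz2 : c (k+1+1) p (q+1) = 0 := by
        by_cases hkk : k + 2 ≤ n
        · refine ih (k+2) (q+1) hkk ?_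
          rcases hke with ⟨s, hs⟩; exact ⟨s+1, by omega⟩
        · exact hhigh _ _ _ (by omega)
      rw [hz2, mul_zero, add_zero] at h
      exact (mul_eq_zero.mp h).resolve_left (Nat.cast_ne_zero.mpr (by omega))

/-- coordinate projection of the tensor product -/
def phi (j : Fin (n+1)) : Vfd n ⊗[ℂ] PolyXY →ₗ[ℂ] PolyXY :=
  TensorProduct.lift ((LinearMap.lsmul ℂ PolyXY).comp (LinearMap.proj j))

lemma phi_tmul (j : Fin (n+1)) (v : Vfd n) (p : PolyXY) :
    phi n j (v ⊗ₜ[ℂ] p) = v j • p := by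
  simp [phi]

lemma phi_decomp (w : Vfd n ⊗[ℂ] PolyXY) :
    ∑ k : Fin (n+1), (Pi.single k 1 : Vfd n) ⊗ₜ[ℂ] (phi n k w) = w := by
  have key : (∑ k : Fin (n+1),
      (TensorProduct.mk ℂ (Vfd n) PolyXY (Pi.single k 1)).comp (phi n k))
      = LinearMap.id := by
    apply TensorProduct.ext'
    intro v p
    simp only [LinearMap.sum_apply, LinearMap.comp_apply, TensorProduct.mk_apply, phi_tmul,
      LinearMap.id_apply]
    calc ∑ k : Fin (n+1), (Pi.single k 1 : Vfd n) ⊗ₜ[ℂ] (v k • p)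
        = ∑ k : Fin (n+1), (Pi.single k (v k) : Vfd n) ⊗ₜ[ℂ] p := by
          refine Finset.sum_congr rfl fun k _ => ?_
          rw [TensorProduct.tmul_smul, TensorProduct.smul_tmul']
          congr 1
          funext x
          by_cases hx : x = k <;> simp [Pi.single_apply, hx]
      _ = (∑ k : Fin (n+1), (Pi.single k (v k) : Vfd n)) ⊗ₜ[ℂ] p := by
          rw [TensorProduct.sum_tmul]
      _ = v ⊗ₜ[ℂ] p := by rw [Finset.univ_sum_single]
  have h2 := congrArg (fun (L : Vfd n ⊗[ℂ] PolyXY →ₗ[ℂ] Vfd n ⊗[ℂ] PolyXY) => L w) key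
  simpa using h2

/-- If `n` is odd then the symplectic Dirac operator
`D⁺ = 2 π(X)⊗M_Y + 2 π(Y)⊗M_X` on `V_n ⊗ ℂ[X,Y]` is injective.  Here
`π(X) W_k = (n−k)·W_{k+1}` and `π(Y) W_k = k·W_{k−1}` (with `W_{−1} = W_{n+1} = 0`). -/
theorem statement8
    (πX πY : Vfd n →ₗ[ℂ] Vfd n)
    (hπX : ∀ k : Fin (n + 1), πX (Pi.single k 1 : Vfd n) =
      if h : (k : ℕ) < n then ((n - (k : ℕ) : ℕ) : ℂ) •
        (Pi.single (⟨(k : ℕ) + 1, by omega⟩ : Fin (n + 1)) 1 : Vfd n) else 0)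
    (hπY : ∀ k : Fin (n + 1), πY (Pi.single k 1 : Vfd n) =
      if h : 0 < (k : ℕ) then ((k : ℕ) : ℂ) •
        (Pi.single (⟨(k : ℕ) - 1, by omega⟩ : Fin (n + 1)) 1 : Vfd n) else 0)
    (Dplus : Vfd n ⊗[ℂ] PolyXY →ₗ[ℂ] Vfd n ⊗[ℂ] PolyXY)
    (hD : Dplus = 2 • (TensorProduct.map πX mulY + TensorProduct.map πY mulX))
    (hodd : Odd n) :
    Function.Injective Dplus := by
  rw [← LinearMap.ker_eq_bot, LinearMap.ker_eq_bot']
  intro z hz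
  -- matrix entries of πX, πY
  have hXe : ∀ k j : Fin (n+1), (πX (Pi.single k 1 : Vfd n)) j
      = if (j:ℕ) = (k:ℕ)+1 then ((n - (k:ℕ) : ℕ) : ℂ) else 0 := by
    intro k j
    rw [hπX k]
    by_cases h : (k:ℕ) < n
    · rw [dif_pos h]
      have hiff : (j = (⟨(k:ℕ)+1, by omega⟩ : Fin (n+1))) ↔ (j:ℕ) = (k:ℕ)+1 := by
        rw [Fin.ext_iff]
      simp only [Pi.smul_apply, smul_eq_mul, Pi.single_apply, hiff]
      by_cases hj : (j:ℕ) = (k:ℕ)+1 <;> simp [hj]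
    · rw [dif_neg h]
      have hj : ¬((j:ℕ) = (k:ℕ)+1) := by have := j.isLt; omega
      simp [hj]
  have hYe : ∀ k j : Fin (n+1), (πY (Pi.single k 1 : Vfd n)) j
      = if (j:ℕ)+1 = (k:ℕ) then ((k:ℕ) : ℂ) else 0 := by
    intro k j
    rw [hπY k]
    by_cases h : 0 < (k:ℕ)
    · rw [dif_pos h]
      have hiff : (j = (⟨(k:ℕ)-1, by omega⟩ : Fin (n+1))) ↔ (j:ℕ)+1 = (k:ℕ) := by
        rw [Fin.ext_iff]
        simp only [Fin.val_mk]
        omega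
      simp only [Pi.smul_apply, smul_eq_mul, Pi.single_apply, hiff]
      by_cases hj : (j:ℕ)+1 = (k:ℕ) <;> simp [hj]
    · rw [dif_neg h]
      have hj : ¬((j:ℕ)+1 = (k:ℕ)) := by omega
      simp [hj]
  -- the fundamental per-coordinate polynomial equation
  have hEone : ∀ j : Fin (n+1),
      (if h : 1 ≤ (j:ℕ) then ((2*(n - ((j:ℕ)-1)) : ℕ):ℂ) •
          (MvPolynomial.X 1 * phi n ⟨(j:ℕ)-1, by omega⟩ z) else 0)
      + (if h : (j:ℕ) < n then ((2*((j:ℕ)+1) : ℕ):ℂ) •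
          (MvPolynomial.X 0 * phi n ⟨(j:ℕ)+1, by omega⟩ z) else 0) = 0 := by
    intro j
    have hterm : ∀ (k : Fin (n+1)) (p : PolyXY),
        phi n j (Dplus ((Pi.single k 1 : Vfd n) ⊗ₜ[ℂ] p))
          = (if (j:ℕ) = (k:ℕ)+1 then ((2*(n - (k:ℕ)) : ℕ):ℂ) • (MvPolynomial.X 1 * p) else 0)
          + (if (j:ℕ)+1 = (k:ℕ) then ((2*(k:ℕ) : ℕ):ℂ) • (MvPolynomial.X 0 * p) else 0) := by
      intro k p
      rw [hD]
      simp only [LinearMap.smul_apply, LinearMap.add_apply, TensorProduct.map_tmul,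
        map_nsmul, map_add, phi_tmul, hXe, hYe, mulX, mulY, LinearMap.mulLeft_apply]
      rw [smul_add]
      congr 1
      · rw [← Nat.cast_smul_eq_nsmul ℂ]
        rw [smul_smul]
        by_cases hc : (j:ℕ) = (k:ℕ)+1 <;> simp [hc]
      · rw [← Nat.cast_smul_eq_nsmul ℂ]
        rw [smul_smul]
        by_cases hc : (j:ℕ)+1 = (k:ℕ) <;> simp [hc]
    have collapse1 : ∀ (g : Fin (n+1) → PolyXY),
        (∑ k : Fin (n+1), (if (j:ℕ) = (k:ℕ)+1 then g k else 0))
        = if h : 1 ≤ (j:ℕ) then g ⟨(j:ℕ)-1, by omega⟩ else 0 := by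
      intro g
      by_cases h : 1 ≤ (j:ℕ)
      · rw [dif_pos h]
        rw [Finset.sum_eq_single (⟨(j:ℕ)-1, by omega⟩ : Fin (n+1))]
        · rw [if_pos (by simp only [Fin.val_mk]; omega)]
        · intro b _ hb
          rw [if_neg (fun hc => hb (Fin.ext (by simp only [Fin.val_mk]; omega)))]
        · intro habs; exact absurd (Finset.mem_univ _) habs
      · rw [dif_neg h]
        apply Finset.sum_eq_zero; intro b _
        rw [if_neg (by omega)]
    have collapse2 : ∀ (g : Fin (n+1) → PolyXY),
        (∑ k : Fin (n+1), (if (j:ℕ)+1 = (k:ℕ) then g k else 0))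
        = if h : (j:ℕ) < n then g ⟨(j:ℕ)+1, by omega⟩ else 0 := by
      intro g
      by_cases h : (j:ℕ) < n
      · rw [dif_pos h]
        rw [Finset.sum_eq_single (⟨(j:ℕ)+1, by omega⟩ : Fin (n+1))]
        · rw [if_pos (by simp only [Fin.val_mk])]
        · intro b _ hb
          rw [if_neg (fun hc => hb (Fin.ext (by simp only [Fin.val_mk]; omega)))]
        · intro habs; exact absurd (Finset.mem_univ _) habs
      · rw [dif_neg h]
        apply Finset.sum_eq_zero; intro b _
        have := b.isLt
        rw [if_neg (by omega)]
    have h0 : phi n j (Dplus (∑ k : Fin (n+1),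
        (Pi.single k 1 : Vfd n) ⊗ₜ[ℂ] (phi n k z))) = 0 := by
      rw [phi_decomp n z, hz, map_zero]
    rw [map_sum, map_sum] at h0
    simp only [hterm] at h0
    rw [Finset.sum_add_distrib, collapse1 (fun k => ((2*(n - (k:ℕ)) : ℕ):ℂ) •
        (MvPolynomial.X 1 * phi n k z)),
      collapse2 (fun k => ((2*((k:ℕ)) : ℕ):ℂ) • (MvPolynomial.X 0 * phi n k z))] at h0
    exact h0
  -- ℕ-indexed components
  set F : ℕ → PolyXY := fun k =>
    if h : k ≤ n then phi n ⟨k, Nat.lt_succ_of_le h⟩ z else 0 with hF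
  have hEnat : ∀ j : ℕ, j ≤ n →
      (if 1 ≤ j then ((2*(n-(j-1)) : ℕ):ℂ) • (MvPolynomial.X 1 * F (j-1)) else 0)
      + ((2*(j+1) : ℕ):ℂ) • (MvPolynomial.X 0 * F (j+1)) = 0 := by
    intro j hj
    have h1 := hEone ⟨j, by omega⟩
    simp only [Fin.val_mk] at h1
    by_cases h1j : 1 ≤ j
    · by_cases hjn : j < n
      · rw [dif_pos h1j, dif_pos hjn] at h1
        rw [if_pos h1j]
        simp only [hF]
        rw [dif_pos (show j-1 ≤ n by omega), dif_pos (show j+1 ≤ n by omega)]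
        exact h1
      · rw [dif_pos h1j, dif_neg hjn, add_zero] at h1
        rw [if_pos h1j]
        simp only [hF]
        rw [dif_pos (show j-1 ≤ n by omega), dif_neg (show ¬(j+1 ≤ n) by omega),
          mul_zero, smul_zero, add_zero]
        exact h1
    · rw [dif_neg h1j] at h1
      rw [if_neg h1j, zero_add]
      simp only [hF]
      by_cases hjn : j < n
      · rw [dif_pos hjn, zero_add] at h1
        rw [dif_pos (show j+1 ≤ n by omega)]
        exact h1
      · rw [dif_neg (show ¬(j+1 ≤ n) by omega), mul_zero, smul_zero]
  -- coefficient equations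
  set c : ℕ → ℕ → ℕ → ℂ := fun k p q =>
    MvPolynomial.coeff (Finsupp.single (0:Fin 2) p + Finsupp.single 1 q) (F k) with hc
  have hE : ∀ j, j ≤ n → ∀ i m : ℕ,
      (if 1 ≤ j ∧ 1 ≤ m then ((2*(n - (j-1)) : ℕ) : ℂ) * c (j-1) i (m-1) else 0)
      + (if 1 ≤ i then ((2*(j+1) : ℕ) : ℂ) * c (j+1) (i-1) m else 0) = 0 := by
    intro j hj i m
    have h2 := congrArg
      (MvPolynomial.coeff (Finsupp.single (0:Fin 2) i + Finsupp.single 1 m)) (hEnat j hj)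
    simp only [MvPolynomial.coeff_add, MvPolynomial.coeff_smul, MvPolynomial.coeff_zero,
      apply_ite (MvPolynomial.coeff (Finsupp.single (0:Fin 2) i + Finsupp.single 1 m)),
      coeffYmul, coeffXmul, smul_eq_mul, mul_ite, mul_zero] at h2
    rw [hc]
    simp only [ite_and]
    exact h2
  have hhigh : ∀ k p q, n < k → c k p q = 0 := by
    intro k p q h
    rw [hc]
    simp only [hF]
    rw [dif_neg (by omega : ¬ k ≤ n), MvPolynomial.coeff_zero]
  have hzero : ∀ k p q, k ≤ n → c k p q = 0 := by
    intro k p q hk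
    rcases Nat.even_or_odd k with he | ho
    · exact chainEven n hodd c hE hhigh p k q hk he
    · exact chainOdd n c hE q k p hk ho
  have hFz : ∀ k : Fin (n+1), phi n k z = 0 := by
    intro k
    have hFk : F (k:ℕ) = phi n k z := by
      simp only [hF]
      rw [dif_pos (show (k:ℕ) ≤ n by omega)]
    rw [← hFk]
    rw [MvPolynomial.eq_zero_iff]
    intro d
    have hd : d = Finsupp.single (0:Fin 2) (d 0) + Finsupp.single 1 (d 1) := by
      ext x; fin_cases x <;> simp [Finsupp.single_apply]
    rw [hd]
    exact hzero _ _ _ (by omega)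
  rw [← phi_decomp n z]
  simp only [hFz, TensorProduct.tmul_zero]
  simp

end Statement8

end
end

section
/- Let Φ be an irreducible reduced root system spanning a finite-dimensional real vector space V with Weyl group W, and let B be a W-invariant positive-definite symmetric bilinear form on V, so that each reflection s_α (α ∈ Φ) lies in O(V,B). Then the set of commutators {[s_α,s_β] = s_α∘s_β − s_β∘s_α : α,β ∈ Φ} ⊂ End(V) spans the Lie algebra so(V,B) of B-skew-adjoint endomorphisms of V. -/
noncomputable section

open scoped Classical

section Statement10

variable {V : Type*} [AddCommGroup V] [Module ℝ V]

/-- The orthogonal reflection of `V` in the hyperplane perpendicular to `α`: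
`s_α(v) = v − (2 B(α,v)/B(α,α)) α`. -/
def reflMap (B : LinearMap.BilinForm ℝ V) (α : V) : Module.End ℝ V :=
  LinearMap.id - (2 / B α α) • (B α).smulRight α

def Emap (B : LinearMap.BilinForm ℝ V) (u v : V) : Module.End ℝ V :=
  (B v).smulRight u - (B u).smulRight v

lemma Emap_apply (B : LinearMap.BilinForm ℝ V) (u v w : V) :
    Emap B u v w = B v w • u - B u w • v := by
  simp [Emap, LinearMap.smulRight_apply]

lemma reflMap_apply (B : LinearMap.BilinForm ℝ V) (α v : V) :
    reflMap B α v = v - (2 / B α α * B α v) • α := by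
  simp only [reflMap, LinearMap.sub_apply, LinearMap.smul_apply, LinearMap.smulRight_apply,
    LinearMap.id_apply, smul_smul]

lemma comm_eq (B : LinearMap.BilinForm ℝ V) (hBsymm : ∀ u v, B u v = B v u) (α β : V) :
    reflMap B α * reflMap B β - reflMap B β * reflMap B α
      = (4 * B α β / (B α α * B β β)) • Emap B α β := by
  apply LinearMap.ext; intro w
  simp only [LinearMap.sub_apply, Module.End.mul_apply, LinearMap.smul_apply,
    reflMap_apply, Emap_apply, map_sub, map_smul, smul_eq_mul, smul_sub, smul_smul]
  rw [hBsymm β α]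
  match_scalars
  · ring
  · ring
  · ring


lemma Emap_skew (B : LinearMap.BilinForm ℝ V) (hBsymm : ∀ u v, B u v = B v u) (u v : V) :
    B.IsSkewAdjoint (Emap B u v) := by
  intro x y
  simp only [Emap_apply, LinearMap.neg_apply, Pi.neg_apply, map_sub, map_smul, LinearMap.sub_apply,
    LinearMap.smul_apply, smul_eq_mul, map_neg, LinearMap.map_sub₂, LinearMap.map_smul₂]
  rw [hBsymm u x, hBsymm v x, hBsymm x u, hBsymm x v]
  ring

lemma skew_le_span_Emap [FiniteDimensional ℝ V] (B : LinearMap.BilinForm ℝ V)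
    (hBsymm : ∀ u v, B u v = B v u) (hnd : B.Nondegenerate)
    (f : Module.End ℝ V) (hf : B.IsSkewAdjoint f) :
    f ∈ Submodule.span ℝ {g : Module.End ℝ V | ∃ u v : V, g = Emap B u v} := by
  classical
  obtain ⟨b⟩ : Nonempty (Module.Basis (Fin (Module.finrank ℝ V)) ℝ V) := ⟨Module.finBasis ℝ V⟩
  obtain ⟨d, hd⟩ : ∃ d, d = B.dualBasis hnd b := ⟨_, rfl⟩
  have hdb : ∀ i j, B (d i) (b j) = if j = i then 1 else 0 := by
    subst hd; exact fun i j => B.apply_dualBasis_left hnd b i j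
  have expand : ∀ x : V, x = ∑ i, B (b i) x • d i := by
    intro x
    conv_lhs => rw [← d.sum_repr x]
    refine Finset.sum_congr rfl fun i _ => ?_
    subst hd
    rw [LinearMap.BilinForm.dualBasis_repr_apply, hBsymm]
  have pull : ∀ (c : Prop) [Decidable c] (h : Fin (Module.finrank ℝ V) → V),
      (∑ x, if c then h x else 0) = if c then ∑ x, h x else 0 := by
    intro c _ h; split <;> simp
  have key : f = ∑ i, ∑ j, ((1/2 : ℝ) * B (b i) (f (b j))) • Emap B (d i) (d j) := by
    apply b.ext; intro k
    conv_lhs => rw [expand (f (b k))]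
    rw [LinearMap.sum_apply]
    simp only [LinearMap.sum_apply, LinearMap.smul_apply, Emap_apply, hdb, smul_sub, smul_smul,
      mul_ite, mul_one, mul_zero, ite_smul, zero_smul, smul_ite, smul_zero, one_smul,
      Finset.sum_sub_distrib, pull, Finset.sum_ite_eq, Finset.mem_univ, if_true]
    rw [← Finset.sum_sub_distrib]
    refine Finset.sum_congr rfl fun i _ => ?_
    have h1 : B (b k) (f (b i)) = - B (b i) (f (b k)) := by
      rw [hBsymm (b k) (f (b i)), hf]
      simp [hBsymm]
    rw [h1, ← sub_smul]
    congr 1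
    ring
  rw [key]
  exact Submodule.sum_mem _ fun i _ => Submodule.sum_mem _ fun j _ =>
    Submodule.smul_mem _ _ (Submodule.subset_span ⟨d i, d j, rfl⟩)

lemma Emap_sub_smul (B : LinearMap.BilinForm ℝ V) (u v : V) (c : ℝ) (x : V) :
    Emap B u (v - c • x) = Emap B u v - c • Emap B u x := by
  apply LinearMap.ext; intro w
  simp only [Emap_apply, map_sub, map_smul, LinearMap.sub_apply, LinearMap.smul_apply,
    smul_eq_mul, LinearMap.map_sub₂, LinearMap.map_smul₂, sub_smul, smul_sub, mul_smul]
  module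

lemma Emap_add_snd (B : LinearMap.BilinForm ℝ V) (u v x : V) :
    Emap B u (v + x) = Emap B u v + Emap B u x := by
  apply LinearMap.ext; intro w
  simp only [Emap_apply, map_add, LinearMap.add_apply, add_smul, smul_add]
  module

lemma Emap_smul_snd (B : LinearMap.BilinForm ℝ V) (u : V) (c : ℝ) (x : V) :
    Emap B u (c • x) = c • Emap B u x := by
  apply LinearMap.ext; intro w
  simp only [Emap_apply, map_smul, LinearMap.smul_apply, smul_eq_mul, mul_smul,
    LinearMap.map_smul₂, smul_sub]
  module

lemma Emap_zero_snd (B : LinearMap.BilinForm ℝ V) (u : V) : Emap B u 0 = 0 := by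
  apply LinearMap.ext; intro w
  simp [Emap_apply]

lemma Emap_swap (B : LinearMap.BilinForm ℝ V) (u v : V) : Emap B u v = - Emap B v u := by
  apply LinearMap.ext; intro w
  simp [Emap_apply]

lemma common_neighbor (B : LinearMap.BilinForm ℝ V)
    (hBsymm : ∀ u v, B u v = B v u) (hBpos : ∀ v, v ≠ 0 → 0 < B v v)
    (Φ : Finset V) (h0 : (0 : V) ∉ Φ)
    (hrefl : ∀ α ∈ Φ, ∀ β ∈ Φ, reflMap B α β ∈ Φ)
    (hirr : ∀ Φ₁ Φ₂ : Finset V, Φ₁ ∪ Φ₂ = Φ →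
      (∀ α ∈ Φ₁, ∀ β ∈ Φ₂, B α β = 0) → Φ₁ = ∅ ∨ Φ₂ = ∅)
    {α β : V} (hα : α ∈ Φ) (hβ : β ∈ Φ) (hab : B α β = 0) :
    ∃ γ ∈ Φ, B α γ ≠ 0 ∧ B γ β ≠ 0 := by
  classical
  by_contra hno
  push_neg at hno
  have hpos : ∀ γ ∈ Φ, B γ γ ≠ 0 := fun γ hγ =>
    (hBpos γ (fun h => h0 (h ▸ hγ))).ne'
  -- the step relation within the "orthogonal to β" part
  set r : V → V → Prop := fun γ δ => δ ∈ Φ ∧ B δ β = 0 ∧ B γ δ ≠ 0 with hr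
  -- main induction: anything reachable from α is orthogonal to every root not orthogonal to β
  have hmain : ∀ γ, Relation.ReflTransGen r α γ → ∀ δ ∈ Φ, B δ β ≠ 0 → B γ δ = 0 := by
    intro γ hreach
    induction hreach with
    | refl =>
      intro δ hδ hδβ
      by_contra h
      exact hδβ (hno δ hδ h)
    | tail hsteps hstep ih =>
      rename_i γ γ'
      intro δ hδ hδβ
      by_contra hγ'δ
      obtain ⟨hγ'Φ, hγ'β, hγγ'⟩ := hstep
      have hδγ' : B δ γ' ≠ 0 := fun h => hγ'δ ((hBsymm γ' δ).trans h)
      set c : ℝ := 2 / B δ δ * B δ γ' with hc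
      have hcne : c ≠ 0 := by
        apply mul_ne_zero _ hδγ'
        exact div_ne_zero two_ne_zero (hpos δ hδ)
      have hδ' : reflMap B δ γ' ∈ Φ := hrefl δ hδ γ' hγ'Φ
      have hδ'eq : reflMap B δ γ' = γ' - c • δ := reflMap_apply B δ γ'
      have h1 : B (reflMap B δ γ') β ≠ 0 := by
        rw [hδ'eq, LinearMap.map_sub₂, LinearMap.map_smul₂, hγ'β, smul_eq_mul]
        simpa using mul_ne_zero hcne hδβ
      have h2 : B γ (reflMap B δ γ') = B γ γ' := by
        rw [hδ'eq, map_sub, map_smul, ih δ hδ hδβ, smul_eq_mul, mul_zero, sub_zero]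
      have := ih (reflMap B δ γ') hδ' h1
      rw [h2] at this
      exact hγγ' this
  -- the connected component of α
  set K : Finset V := Φ.filter (fun γ => Relation.ReflTransGen r α γ) with hK
  have hαK : α ∈ K := Finset.mem_filter.mpr ⟨hα, Relation.ReflTransGen.refl⟩
  have hunion : K ∪ (Φ \ K) = Φ := Finset.union_sdiff_of_subset (Finset.filter_subset _ _)
  have horth : ∀ γ ∈ K, ∀ δ ∈ Φ \ K, B γ δ = 0 := by
    intro γ hγ δ hδ
    obtain ⟨hγΦ, hγreach⟩ := Finset.mem_filter.mp hγ
    obtain ⟨hδΦ, hδK⟩ := Finset.mem_sdiff.mp hδ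
    by_contra h
    by_cases hδβ : B δ β = 0
    · exact hδK (Finset.mem_filter.mpr ⟨hδΦ, hγreach.tail ⟨hδΦ, hδβ, h⟩⟩)
    · exact h (hmain γ hγreach δ hδΦ hδβ)
  rcases hirr K (Φ \ K) hunion horth with h | h
  · exact Finset.notMem_empty α (h ▸ hαK)
  · have hβK : β ∈ K := by
      by_contra hβK
      exact Finset.notMem_empty β (h ▸ Finset.mem_sdiff.mpr ⟨hβ, hβK⟩)
    have hβreach := (Finset.mem_filter.mp hβK).2
    rcases hβreach.cases_tail with heq | ⟨c, _, hc⟩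
    · rw [heq] at hab
      exact hpos α hα hab
    · exact hpos β hβ hc.2.1

/-- Let `Φ` be an irreducible reduced root system spanning `V`, `B` a
Weyl-group-invariant positive-definite symmetric bilinear form.  Then the commutators
`[s_α, s_β]`, `α, β ∈ Φ`, span the Lie algebra `so(V,B)` of `B`-skew-adjoint
endomorphisms of `V`. -/
theorem statement10 [FiniteDimensional ℝ V]
    (B : LinearMap.BilinForm ℝ V)
    (hBsymm : ∀ u v, B u v = B v u)
    (hBpos : ∀ v, v ≠ 0 → 0 < B v v)
    (Φ : Finset V)
    (h0 : (0 : V) ∉ Φ)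
    (hspan : Submodule.span ℝ (Φ : Set V) = ⊤)
    (hrefl : ∀ α ∈ Φ, ∀ β ∈ Φ, reflMap B α β ∈ Φ)
    (hred : ∀ α ∈ Φ, ∀ c : ℝ, c • α ∈ Φ → c = 1 ∨ c = -1)
    (hcrys : ∀ α ∈ Φ, ∀ β ∈ Φ, ∃ m : ℤ, 2 * B α β / B α α = (m : ℝ))
    (hirr : ∀ Φ₁ Φ₂ : Finset V, Φ₁ ∪ Φ₂ = Φ →
      (∀ α ∈ Φ₁, ∀ β ∈ Φ₂, B α β = 0) → Φ₁ = ∅ ∨ Φ₂ = ∅) :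
    Submodule.span ℝ
      {f : Module.End ℝ V | ∃ α ∈ Φ, ∃ β ∈ Φ,
        f = reflMap B α * reflMap B β - reflMap B β * reflMap B α}
      = B.skewAdjointSubmodule := by
  classical
  have hpos : ∀ γ ∈ Φ, B γ γ ≠ 0 := fun γ hγ => (hBpos γ (fun h => h0 (h ▸ hγ))).ne'
  set S := Submodule.span ℝ
      {f : Module.End ℝ V | ∃ α ∈ Φ, ∃ β ∈ Φ,
        f = reflMap B α * reflMap B β - reflMap B β * reflMap B α} with hS
  apply le_antisymm
  · rw [Submodule.span_le]
    rintro f ⟨α, hα, β, hβ, rfl⟩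
    rw [SetLike.mem_coe, comm_eq B hBsymm]
    exact Submodule.smul_mem _ _
      ((LinearMap.mem_skewAdjointSubmodule (B := B) _).mpr (Emap_skew B hBsymm α β))
  · -- step 1: Emap of roots with nonzero pairing
    have claim_ne : ∀ α ∈ Φ, ∀ β ∈ Φ, B α β ≠ 0 → Emap B α β ∈ S := by
      intro α hα β hβ hne
      have hc : (4 * B α β / (B α α * B β β)) ≠ 0 := by
        apply div_ne_zero (mul_ne_zero four_ne_zero hne)
        exact mul_ne_zero (hpos α hα) (hpos β hβ)
      have hmem : reflMap B α * reflMap B β - reflMap B β * reflMap B α ∈ S :=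
        Submodule.subset_span ⟨α, hα, β, hβ, rfl⟩
      have := Submodule.smul_mem S (4 * B α β / (B α α * B β β))⁻¹ hmem
      rwa [comm_eq B hBsymm, smul_smul, inv_mul_cancel₀ hc, one_smul] at this
    -- step 2: Emap of any pair of roots
    have claim0 : ∀ α ∈ Φ, ∀ β ∈ Φ, Emap B α β ∈ S := by
      intro α hα β hβ
      by_cases hne : B α β = 0
      · obtain ⟨γ, hγ, hαγ, hγβ⟩ :=
          common_neighbor B hBsymm hBpos Φ h0 hrefl hirr hα hβ hne
        have hγβ' : B γ β ≠ 0 := hγβ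
        set c : ℝ := 2 / B γ γ * B γ β with hcdef
        have hcne : c ≠ 0 :=
          mul_ne_zero (div_ne_zero two_ne_zero (hpos γ hγ)) hγβ'
        have hβ'Φ : reflMap B γ β ∈ Φ := hrefl γ hγ β hβ
        have hβ'eq : reflMap B γ β = β - c • γ := reflMap_apply B γ β
        have hαβ' : B α (reflMap B γ β) ≠ 0 := by
          rw [hβ'eq, map_sub, map_smul, hne, smul_eq_mul, zero_sub, neg_ne_zero]
          exact mul_ne_zero hcne hαγ
        have hsplit : Emap B α β = Emap B α (reflMap B γ β) + c • Emap B α γ := by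
          rw [hβ'eq, Emap_sub_smul]
          abel
        rw [hsplit]
        exact Submodule.add_mem _ (claim_ne α hα _ hβ'Φ hαβ')
          (Submodule.smul_mem _ _ (claim_ne α hα γ hγ hαγ))
      · exact claim_ne α hα β hβ hne
    -- step 3: extend to all of V by linearity
    have claim1 : ∀ α ∈ Φ, ∀ v : V, Emap B α v ∈ S := by
      intro α hα v
      have hv : v ∈ Submodule.span ℝ (Φ : Set V) := by rw [hspan]; trivial
      induction hv using Submodule.span_induction with
      | mem x hx => exact claim0 α hα x hx
      | zero => rw [Emap_zero_snd]; exact Submodule.zero_mem _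
      | add x y _ _ hx hy => rw [Emap_add_snd]; exact Submodule.add_mem _ hx hy
      | smul c x _ hx => rw [Emap_smul_snd]; exact Submodule.smul_mem _ _ hx
    have claim2 : ∀ u v : V, Emap B u v ∈ S := by
      intro u v
      have hu : u ∈ Submodule.span ℝ (Φ : Set V) := by rw [hspan]; trivial
      induction hu using Submodule.span_induction with
      | mem x hx => exact claim1 x hx v
      | zero =>
        rw [Emap_swap, Emap_zero_snd]; simpa using Submodule.zero_mem S
      | add x y _ _ hx hy =>
        rw [Emap_swap, Emap_add_snd] at *
        simpa using Submodule.neg_mem _ (Submodule.add_mem _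
          (Submodule.neg_mem _ hx) (Submodule.neg_mem _ hy))
      | smul c x _ hx =>
        rw [Emap_swap, Emap_smul_snd] at *
        simpa using Submodule.neg_mem _ (Submodule.smul_mem _ c (Submodule.neg_mem _ hx))
    -- conclude
    intro f hf
    have hskew : B.IsSkewAdjoint f := (LinearMap.mem_skewAdjointSubmodule (B := B) f).mp hf
    have hnd : B.Nondegenerate := by
      refine ⟨fun v hv => ?_, fun v hv => ?_⟩
      all_goals
      by_contra h
      exact (hBpos v h).ne' (hv v)
    have := skew_le_span_Emap B hBsymm hnd f hskew
    have hle : Submodule.span ℝ {g : Module.End ℝ V | ∃ u v : V, g = Emap B u v} ≤ S := by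
      rw [Submodule.span_le]
      rintro g ⟨u, v, rfl⟩
      exact claim2 u v
    exact hle this

end Statement10

end
end

section
/- Let n ≥ 2 and consider the root system of type A_{n−1}: Φ = {ε_i−ε_j : 1 ≤ i ≠ j ≤ n} in ℝⁿ with the standard inner product B, positive roots ε_i−ε_j (i < j), Weyl group S_n with s_{ε_i−ε_j} the transposition (i j), and all parameters k_α = 1. Set Ω_{S_n} = (1/4)Σ_{α,β>0} B(α,β)·s_α s_β ∈ ℂ[S_n]. Then: (a) Ω_{S_n} = (1/4)(n(n−1) + e_{(123)}), where e_{(123)} ∈ ℂ[S_n] is the sum of all 3-cycles; (b) Ω_{S_n} = (1/4)(n(n−1)/2 + Σ_{i=1}^{n} T_i²), where T_i = (1,i)+(2,i)+⋯+(i−1,i) ∈ ℂ[S_n] are the Jucys–Murphy elements (T_1 = 0). -/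
noncomputable section

open scoped Classical

section Statement13

variable (n : ℕ)

/-- The positive roots of type `A_{n-1}`: the roots `ε_i − ε_j`, `i < j`, encoded by the
pair `(i,j)`. -/
def posRootsA : Finset (Fin n × Fin n) := Finset.univ.filter fun p => p.1 < p.2

/-- The root `ε_i − ε_j` as a vector of `ℝⁿ`. -/
def rootVecA (p : Fin n × Fin n) : Fin n → ℝ := Pi.single p.1 1 - Pi.single p.2 1

/-- The standard inner product of `ℝⁿ`. -/
def dotR (x y : Fin n → ℝ) : ℝ := ∑ i, x i * y i

/-- The sum of all `3`-cycles in `ℂ[S_n]`. -/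
def threeCycleSum : MonoidAlgebra ℂ (Equiv.Perm (Fin n)) :=
  ∑ σ ∈ Finset.univ.filter fun σ : Equiv.Perm (Fin n) => σ.IsThreeCycle,
    MonoidAlgebra.single σ (1 : ℂ)

/-- The Jucys–Murphy element `T_i = (1,i) + (2,i) + ⋯ + (i−1,i)` (so `T_1 = 0`). -/
def jucysMurphy (i : Fin n) : MonoidAlgebra ℂ (Equiv.Perm (Fin n)) :=
  ∑ j ∈ Finset.univ.filter fun j : Fin n => j < i,
    MonoidAlgebra.single (Equiv.swap j i) (1 : ℂ)

/-- `Ω_{S_n} = (1/4) Σ_{α,β>0} B(α,β) s_α s_β`, summed over ordered pairs of positive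
roots of type `A_{n-1}`, with all parameters `k_α = 1`. -/
def OmegaSn : MonoidAlgebra ℂ (Equiv.Perm (Fin n)) :=
  (1 / 4 : ℂ) • ∑ p ∈ posRootsA n, ∑ q ∈ posRootsA n,
    ((dotR n (rootVecA n p) (rootVecA n q) : ℝ) : ℂ) •
      MonoidAlgebra.single (Equiv.swap p.1 p.2 * Equiv.swap q.1 q.2) (1 : ℂ)

/-! ### Auxiliary material for the proof -/

lemma mem_PR {p : Fin n × Fin n} : p ∈ posRootsA n ↔ p.1 < p.2 := by simp [posRootsA]

lemma card_PR : 2 * (posRootsA n).card = n * n - n := by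
  set G : Finset (Fin n × Fin n) := Finset.univ.filter fun p => p.2 < p.1 with hG
  have hswap : G.card = (posRootsA n).card := by
    refine Finset.card_nbij' Prod.swap Prod.swap ?_ ?_ ?_ ?_
    · intro p hp; simp only [hG, Finset.mem_filter, Finset.mem_univ, true_and] at hp ⊢
      simpa [posRootsA] using hp
    · intro p hp; simp only [posRootsA, Finset.mem_filter, Finset.mem_univ, true_and] at hp ⊢
      simpa [hG] using hp
    · intro p _; simp
    · intro p _; simp
  have hunion : (Finset.univ : Finset (Fin n)).offDiag = posRootsA n ∪ G := by
    ext p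
    simp only [Finset.mem_offDiag, Finset.mem_univ, true_and, Finset.mem_union, mem_PR, hG,
      Finset.mem_filter]
    constructor
    · intro h; exact lt_or_gt_of_ne h
    · intro h
      rcases h with h | h
      · exact ne_of_lt h
      · exact ne_of_gt h
  have hdisj : Disjoint (posRootsA n) G := by
    rw [Finset.disjoint_left]
    intro p h1 h2
    rw [mem_PR] at h1
    simp only [hG, Finset.mem_filter] at h2
    exact absurd h1 (lt_asymm h2.2)
  have hcard := Finset.offDiag_card (Finset.univ : Finset (Fin n))
  rw [hunion, Finset.card_union_of_disjoint hdisj, hswap, Finset.card_univ, Fintype.card_fin]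
    at hcard
  omega

lemma dotAux (a b : Fin n) :
    (∑ i, (Pi.single a 1 : Fin n → ℝ) i * (Pi.single b 1 : Fin n → ℝ) i)
      = if a = b then 1 else 0 := by
  by_cases h : a = b
  · subst h; simp [Pi.single_apply]
  · simp only [Pi.single_apply, h, if_false, mul_ite, ite_mul, one_mul, mul_one, mul_zero,
      zero_mul]
    rw [Finset.sum_eq_zero]
    intro i _
    by_cases h1 : i = a <;> by_cases h2 : i = b <;> simp_all

lemma dot_eq (p q : Fin n × Fin n) :
    ((dotR n (rootVecA n p) (rootVecA n q) : ℝ) : ℂ)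
      = (if p.1 = q.1 then 1 else 0) - (if p.1 = q.2 then 1 else 0)
        - (if p.2 = q.1 then 1 else 0) + (if p.2 = q.2 then 1 else 0) := by
  have h : dotR n (rootVecA n p) (rootVecA n q)
      = ((if p.1 = q.1 then 1 else 0) - (if p.1 = q.2 then 1 else 0)
        - (if p.2 = q.1 then 1 else 0) + (if p.2 = q.2 then 1 else 0) : ℝ) := by
    unfold dotR rootVecA
    simp only [Pi.sub_apply, sub_mul, mul_sub]
    rw [Finset.sum_sub_distrib, Finset.sum_sub_distrib, Finset.sum_sub_distrib,
      dotAux, dotAux, dotAux, dotAux]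
    ring
  rw [h]
  push_cast
  split_ifs <;> norm_num

lemma swapI1 {x y z : Fin n} (hxy : x ≠ y) (hxz : x ≠ z) (hyz : y ≠ z) :
    Equiv.swap x z * Equiv.swap y z = Equiv.swap x y * Equiv.swap x z := by
  ext w
  simp only [Equiv.Perm.mul_apply, Equiv.swap_apply_def]
  split_ifs <;> simp_all

lemma swapI2 {x y z : Fin n} (hxy : x ≠ y) (hxz : x ≠ z) (hyz : y ≠ z) :
    Equiv.swap y z * Equiv.swap x z = Equiv.swap x z * Equiv.swap x y := by
  ext w
  simp only [Equiv.Perm.mul_apply, Equiv.swap_apply_def]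
  split_ifs <;> simp_all

lemma swapI3 {x y z : Fin n} (hxy : x ≠ y) (hxz : x ≠ z) (hyz : y ≠ z) :
    Equiv.swap y z * Equiv.swap x y = Equiv.swap x y * Equiv.swap x z := by
  ext w
  simp only [Equiv.Perm.mul_apply, Equiv.swap_apply_def]
  split_ifs <;> simp_all

lemma swapI4 {x y z : Fin n} (hxy : x ≠ y) (hxz : x ≠ z) (hyz : y ≠ z) :
    Equiv.swap x y * Equiv.swap y z = Equiv.swap x z * Equiv.swap x y := by
  ext w
  simp only [Equiv.Perm.mul_apply, Equiv.swap_apply_def]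
  split_ifs <;> simp_all

lemma s1_apply {x y z : Fin n} (hxy : x ≠ y) (hyz : y ≠ z) :
    (Equiv.swap x z * Equiv.swap x y) x = y := by
  simp [Equiv.Perm.mul_apply, Equiv.swap_apply_of_ne_of_ne (Ne.symm hxy) hyz]

lemma s2_apply {x y z : Fin n} (hxz : x ≠ z) (hyz : y ≠ z) :
    (Equiv.swap x y * Equiv.swap x z) x = z := by
  simp [Equiv.Perm.mul_apply, Equiv.swap_apply_of_ne_of_ne (Ne.symm hxz) (Ne.symm hyz)]

lemma s1_support {x y z : Fin n} (hxy : x ≠ y) (hxz : x ≠ z) (hyz : y ≠ z) :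
    (Equiv.swap x z * Equiv.swap x y).support = {x, y, z} := by
  rw [Equiv.swap_comm x z,
    Equiv.Perm.support_swap_mul_swap (by simp [hxy, hxz, hyz, Ne.symm hxz, Ne.symm hyz])]
  ext w; simp; tauto

lemma s2_support {x y z : Fin n} (hxy : x ≠ y) (hxz : x ≠ z) (hyz : y ≠ z) :
    (Equiv.swap x y * Equiv.swap x z).support = {x, y, z} := by
  rw [Equiv.swap_comm x y,
    Equiv.Perm.support_swap_mul_swap (by simp [hxz, hyz, Ne.symm hxy, Ne.symm hxz, Ne.symm hyz])]
  ext w; simp; tauto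

lemma triple_eq {x y z x' y' z' : Fin n} (h : ({x, y, z} : Finset (Fin n)) = {x', y', z'})
    (h1 : x < y) (h2 : y < z) (h1' : x' < y') (h2' : y' < z') :
    x = x' ∧ y = y' ∧ z = z' := by
  have hx := (Finset.ext_iff.mp h x).mp (by simp)
  have hy := (Finset.ext_iff.mp h y).mp (by simp)
  have hz := (Finset.ext_iff.mp h z).mp (by simp)
  have hx' := (Finset.ext_iff.mp h x').mpr (by simp)
  have hy' := (Finset.ext_iff.mp h y').mpr (by simp)
  have hz' := (Finset.ext_iff.mp h z').mpr (by simp)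
  simp only [Finset.mem_insert, Finset.mem_singleton, Fin.ext_iff, Fin.lt_def] at *
  omega

lemma threeCycle_form {σ : Equiv.Perm (Fin n)} (h : σ.IsThreeCycle) {x : Fin n}
    (hx : x ∈ σ.support) :
    σ = Equiv.swap x (σ (σ x)) * Equiv.swap x (σ x) ∧
      σ.support = {x, σ x, σ (σ x)} := by
  set y := σ x with hy
  set z := σ y with hz
  have hxy : x ≠ y := fun e => (Equiv.Perm.mem_support.mp hx) e.symm
  have hysupp : y ∈ σ.support := Equiv.Perm.apply_mem_support.mpr hx
  have hyz : y ≠ z := fun e => (Equiv.Perm.mem_support.mp hysupp) e.symm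
  have hzsupp : z ∈ σ.support := Equiv.Perm.apply_mem_support.mpr hysupp
  have hcard := h.card_support
  have hxz : x ≠ z := by
    intro e
    have hsub : ({x, y} : Finset (Fin n)) ⊆ σ.support := by
      intro w hw; simp at hw; rcases hw with rfl | rfl <;> assumption
    have hss : ({x, y} : Finset (Fin n)) ⊂ σ.support := by
      refine Finset.ssubset_iff_subset_ne.mpr ⟨hsub, ?_⟩
      intro e2
      have : ({x, y} : Finset (Fin n)).card = 3 := by rw [e2, hcard]
      rw [Finset.card_insert_of_notMem (by simp [hxy]), Finset.card_singleton] at this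
      omega
    obtain ⟨w, hwsupp, hw⟩ := Finset.exists_of_ssubset hss
    simp only [Finset.mem_insert, Finset.mem_singleton, not_or] at hw
    obtain ⟨hwx, hwy⟩ := hw
    have hsupp3 : σ.support = {x, y, w} := by
      refine (Finset.eq_of_subset_of_card_le ?_ ?_).symm
      · intro v hv; simp only [Finset.mem_insert, Finset.mem_singleton] at hv
        rcases hv with rfl | rfl | rfl <;> assumption
      · rw [hcard, Finset.card_insert_of_notMem (by simp [hxy, Ne.symm hwx]),
          Finset.card_insert_of_notMem (by simp [Ne.symm hwy]), Finset.card_singleton]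
    have hws : σ w ∈ σ.support := Equiv.Perm.apply_mem_support.mpr hwsupp
    rw [hsupp3] at hws
    simp only [Finset.mem_insert, Finset.mem_singleton] at hws
    rcases hws with e1 | e1 | e1
    · exact hwy (σ.injective (by rw [e1, ← hz, ← e]))
    · exact hwx (σ.injective (by rw [e1, ← hy]))
    · exact (Equiv.Perm.mem_support.mp hwsupp) e1
  have hsupp : σ.support = {x, y, z} := by
    refine (Finset.eq_of_subset_of_card_le ?_ ?_).symm
    · intro v hv; simp only [Finset.mem_insert, Finset.mem_singleton] at hv
      rcases hv with rfl | rfl | rfl <;> assumption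
    · rw [hcard, Finset.card_insert_of_notMem (by simp [hxy, hxz]),
        Finset.card_insert_of_notMem (by simp [hyz]), Finset.card_singleton]
  have hzval : σ z = x := by
    have hzs : σ z ∈ σ.support := Equiv.Perm.apply_mem_support.mpr hzsupp
    rw [hsupp] at hzs
    simp only [Finset.mem_insert, Finset.mem_singleton] at hzs
    rcases hzs with e1 | e1 | e1
    · exact e1
    · exact absurd (σ.injective (e1.trans hy)) (Ne.symm hxz)
    · exact absurd e1 (Equiv.Perm.mem_support.mp hzsupp)
  refine ⟨?_, hsupp⟩
  ext w
  by_cases hwx : w = x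
  · subst hwx
    rw [Equiv.Perm.mul_apply, Equiv.swap_apply_left,
      Equiv.swap_apply_of_ne_of_ne (Ne.symm hxy) hyz]
  by_cases hwy : w = y
  · subst hwy
    rw [Equiv.Perm.mul_apply, Equiv.swap_apply_right, Equiv.swap_apply_left, ← hz]
  by_cases hwz : w = z
  · subst hwz
    rw [Equiv.Perm.mul_apply, Equiv.swap_apply_of_ne_of_ne (Ne.symm hxz) (Ne.symm hyz),
      Equiv.swap_apply_right, hzval]
  · have hwsupp : w ∉ σ.support := by rw [hsupp]; simp [hwx, hwy, hwz]
    rw [Equiv.Perm.notMem_support.mp hwsupp, Equiv.Perm.mul_apply,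
      Equiv.swap_apply_of_ne_of_ne hwx hwy, Equiv.swap_apply_of_ne_of_ne hwx hwz]

def T3 : Finset (Fin n × Fin n × Fin n) :=
  Finset.univ.filter fun t => t.1 < t.2.1 ∧ t.2.1 < t.2.2

lemma mem_T3 {t : Fin n × Fin n × Fin n} : t ∈ T3 n ↔ t.1 < t.2.1 ∧ t.2.1 < t.2.2 := by
  simp [T3]

def A1 : MonoidAlgebra ℂ (Equiv.Perm (Fin n)) :=
  ∑ t ∈ T3 n, MonoidAlgebra.single (Equiv.swap t.1 t.2.2 * Equiv.swap t.1 t.2.1) (1 : ℂ)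

def A2 : MonoidAlgebra ℂ (Equiv.Perm (Fin n)) :=
  ∑ t ∈ T3 n, MonoidAlgebra.single (Equiv.swap t.1 t.2.1 * Equiv.swap t.1 t.2.2) (1 : ℂ)

lemma threeCycleSum_eq : threeCycleSum n = A1 n + A2 n := by
  have h2 : A1 n + A2 n = ∑ tb ∈ (T3 n) ×ˢ (Finset.univ : Finset Bool),
      MonoidAlgebra.single
        (if tb.2 then Equiv.swap tb.1.1 tb.1.2.2 * Equiv.swap tb.1.1 tb.1.2.1
          else Equiv.swap tb.1.1 tb.1.2.1 * Equiv.swap tb.1.1 tb.1.2.2) (1 : ℂ) := by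
    rw [Finset.sum_product, A1, A2, ← Finset.sum_add_distrib]
    exact Finset.sum_congr rfl fun t ht => by simp
  rw [h2, threeCycleSum]
  refine (Finset.sum_bij (fun tb _ =>
      if tb.2 then Equiv.swap tb.1.1 tb.1.2.2 * Equiv.swap tb.1.1 tb.1.2.1
        else Equiv.swap tb.1.1 tb.1.2.1 * Equiv.swap tb.1.1 tb.1.2.2) ?_ ?_ ?_ ?_).symm
  · rintro ⟨⟨x, y, z⟩, b⟩ hm
    simp only [Finset.mem_product, mem_T3, Finset.mem_univ, and_true] at hm
    obtain ⟨hxy, hyz⟩ := hm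
    have hxz := hxy.trans hyz
    simp only [Finset.mem_filter, Finset.mem_univ, true_and]
    cases b <;> simp only [if_true, if_false, Bool.false_eq_true]
    · exact Equiv.Perm.isThreeCycle_swap_mul_swap_same hxy.ne hxz.ne hyz.ne
    · exact Equiv.Perm.isThreeCycle_swap_mul_swap_same hxz.ne hxy.ne (Ne.symm hyz.ne)
  · rintro ⟨⟨x, y, z⟩, b⟩ h1 ⟨⟨x', y', z'⟩, b'⟩ h1' heq
    simp only [Finset.mem_product, mem_T3, Finset.mem_univ, and_true] at h1 h1'
    obtain ⟨hxy, hyz⟩ := h1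
    obtain ⟨hxy', hyz'⟩ := h1'
    have hxz := hxy.trans hyz
    have hxz' := hxy'.trans hyz'
    have hsupp := congrArg Equiv.Perm.support heq
    cases b <;> cases b' <;>
      simp only [if_true, if_false, Bool.false_eq_true] at heq hsupp
    · rw [s2_support n hxy.ne hxz.ne hyz.ne, s2_support n hxy'.ne hxz'.ne hyz'.ne] at hsupp
      obtain ⟨e1, e2, e3⟩ := triple_eq n hsupp hxy hyz hxy' hyz'
      subst e1; subst e2; subst e3; rfl
    · rw [s2_support n hxy.ne hxz.ne hyz.ne, s1_support n hxy'.ne hxz'.ne hyz'.ne] at hsupp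
      obtain ⟨e1, e2, e3⟩ := triple_eq n hsupp hxy hyz hxy' hyz'
      subst e1; subst e2; subst e3
      have := Equiv.ext_iff.mp heq x
      rw [s2_apply n hxz.ne hyz.ne, s1_apply n hxy.ne hyz.ne] at this
      exact absurd this.symm hyz.ne
    · rw [s1_support n hxy.ne hxz.ne hyz.ne, s2_support n hxy'.ne hxz'.ne hyz'.ne] at hsupp
      obtain ⟨e1, e2, e3⟩ := triple_eq n hsupp hxy hyz hxy' hyz'
      subst e1; subst e2; subst e3
      have := Equiv.ext_iff.mp heq x
      rw [s1_apply n hxy.ne hyz.ne, s2_apply n hxz.ne hyz.ne] at this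
      exact absurd this hyz.ne
    · rw [s1_support n hxy.ne hxz.ne hyz.ne, s1_support n hxy'.ne hxz'.ne hyz'.ne] at hsupp
      obtain ⟨e1, e2, e3⟩ := triple_eq n hsupp hxy hyz hxy' hyz'
      subst e1; subst e2; subst e3; rfl
  · intro σ hσ
    simp only [Finset.mem_filter, Finset.mem_univ, true_and] at hσ
    have hne : σ.support.Nonempty := by
      rw [← Finset.card_pos, hσ.card_support]; norm_num
    set x := σ.support.min' hne with hxdef
    have hx : x ∈ σ.support := Finset.min'_mem _ _
    obtain ⟨hform, hsupp⟩ := threeCycle_form n hσ hx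
    set y := σ x with hy
    set z := σ y with hz
    have hxy : x ≠ y := fun e => (Equiv.Perm.mem_support.mp hx) e.symm
    have hysupp : y ∈ σ.support := Equiv.Perm.apply_mem_support.mpr hx
    have hyz : y ≠ z := fun e => (Equiv.Perm.mem_support.mp hysupp) e.symm
    have hzsupp : z ∈ σ.support := Equiv.Perm.apply_mem_support.mpr hysupp
    have hxz : x ≠ z := by
      intro e
      have hpair : ({x, y, z} : Finset (Fin n)) = {x, y} := by
        rw [← e]; ext w; simp; tauto
      have h3 := hσ.card_support
      rw [hsupp, hpair, Finset.card_insert_of_notMem (by simp [hxy]),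
        Finset.card_singleton] at h3
      omega
    have hxy' : x < y := lt_of_le_of_ne (Finset.min'_le _ _ hysupp) hxy
    have hxz' : x < z := lt_of_le_of_ne (Finset.min'_le _ _ hzsupp) hxz
    rcases lt_or_gt_of_ne hyz with hlt | hgt
    · exact ⟨⟨⟨x, y, z⟩, true⟩,
        Finset.mem_product.mpr ⟨(mem_T3 n).mpr ⟨hxy', hlt⟩, Finset.mem_univ _⟩,
        by simp [hform.symm]⟩
    · exact ⟨⟨⟨x, z, y⟩, false⟩,
        Finset.mem_product.mpr ⟨(mem_T3 n).mpr ⟨hxz', hgt⟩, Finset.mem_univ _⟩,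
        by simp [hform.symm]⟩
  · intro tb _; rfl

lemma sum_class_a :
    ∑ pq ∈ (posRootsA n ×ˢ posRootsA n).filter fun pq => pq.1.1 = pq.2.1,
      MonoidAlgebra.single (Equiv.swap pq.1.1 pq.1.2 * Equiv.swap pq.2.1 pq.2.2) (1 : ℂ)
    = (posRootsA n).card • (1 : MonoidAlgebra ℂ (Equiv.Perm (Fin n))) + (A2 n + A1 n) := by
  have hsplit : (posRootsA n ×ˢ posRootsA n).filter (fun pq => pq.1.1 = pq.2.1)
      = ((posRootsA n ×ˢ posRootsA n).filter fun pq => pq.1.1 = pq.2.1 ∧ pq.1.2 = pq.2.2)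
        ∪ (((posRootsA n ×ˢ posRootsA n).filter fun pq => pq.1.1 = pq.2.1 ∧ pq.1.2 < pq.2.2)
          ∪ ((posRootsA n ×ˢ posRootsA n).filter fun pq =>
              pq.1.1 = pq.2.1 ∧ pq.2.2 < pq.1.2)) := by
    rw [← Finset.filter_or, ← Finset.filter_or]
    refine Finset.filter_congr fun pq _ => ?_
    constructor
    · intro h
      rcases lt_trichotomy pq.1.2 pq.2.2 with h' | h' | h' <;> tauto
    · tauto
  have hd1 : Disjoint
      ((posRootsA n ×ˢ posRootsA n).filter fun pq => pq.1.1 = pq.2.1 ∧ pq.1.2 < pq.2.2)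
      ((posRootsA n ×ˢ posRootsA n).filter fun pq => pq.1.1 = pq.2.1 ∧ pq.2.2 < pq.1.2) := by
    rw [Finset.disjoint_left]
    intro pq h1 h2
    simp only [Finset.mem_filter] at h1 h2
    exact absurd h1.2.2 (lt_asymm h2.2.2)
  have hd2 : Disjoint
      ((posRootsA n ×ˢ posRootsA n).filter fun pq => pq.1.1 = pq.2.1 ∧ pq.1.2 = pq.2.2)
      (((posRootsA n ×ˢ posRootsA n).filter fun pq => pq.1.1 = pq.2.1 ∧ pq.1.2 < pq.2.2)
        ∪ ((posRootsA n ×ˢ posRootsA n).filter fun pq =>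
            pq.1.1 = pq.2.1 ∧ pq.2.2 < pq.1.2)) := by
    rw [Finset.disjoint_left]
    intro pq h1 h2
    simp only [Finset.mem_filter, Finset.mem_union] at h1 h2
    rcases h2 with h2 | h2
    · exact (ne_of_lt h2.2.2) h1.2.2
    · exact (ne_of_gt h2.2.2) h1.2.2
  rw [hsplit, Finset.sum_union hd2, Finset.sum_union hd1]
  congr 1
  · have h1 : ∑ pq ∈ (posRootsA n ×ˢ posRootsA n).filter fun pq =>
          pq.1.1 = pq.2.1 ∧ pq.1.2 = pq.2.2,
        MonoidAlgebra.single (Equiv.swap pq.1.1 pq.1.2 * Equiv.swap pq.2.1 pq.2.2) (1 : ℂ)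
        = ∑ _p ∈ posRootsA n, (1 : MonoidAlgebra ℂ (Equiv.Perm (Fin n))) := by
      refine Finset.sum_nbij' (fun pq => pq.1) (fun p => (p, p)) ?_ ?_ ?_ ?_ ?_
      · intro pq h
        simp only [Finset.mem_filter, Finset.mem_product] at h
        exact h.1.1
      · intro p hp
        exact Finset.mem_filter.mpr ⟨Finset.mem_product.mpr ⟨hp, hp⟩, rfl, rfl⟩
      · intro pq h
        simp only [Finset.mem_filter, Finset.mem_product] at h
        exact Prod.ext rfl (Prod.ext h.2.1 h.2.2)
      · intro p _; rfl
      · intro pq h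
        simp only [Finset.mem_filter] at h
        rw [← h.2.1, ← h.2.2, Equiv.swap_mul_self, ← MonoidAlgebra.one_def]
    rw [h1, Finset.sum_const]
  congr 1
  · refine Finset.sum_nbij' (fun pq => (pq.1.1, pq.1.2, pq.2.2))
      (fun t => ((t.1, t.2.1), (t.1, t.2.2))) ?_ ?_ ?_ ?_ ?_
    · intro pq h
      simp only [Finset.mem_filter, Finset.mem_product, mem_PR] at h
      exact (mem_T3 n).mpr ⟨h.1.1, h.2.2⟩
    · intro t ht
      rw [mem_T3] at ht
      exact Finset.mem_filter.mpr ⟨Finset.mem_product.mpr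
        ⟨(mem_PR n).mpr ht.1, (mem_PR n).mpr (ht.1.trans ht.2)⟩, rfl, ht.2⟩
    · intro pq h
      simp only [Finset.mem_filter, Finset.mem_product, mem_PR] at h
      dsimp only
      exact Prod.ext rfl (Prod.ext h.2.1 rfl)
    · intro t _; rfl
    · intro pq h
      simp only [Finset.mem_filter, Finset.mem_product, mem_PR] at h
      dsimp only
      rw [h.2.1]
  · refine Finset.sum_nbij' (fun pq => (pq.1.1, pq.2.2, pq.1.2))
      (fun t => ((t.1, t.2.2), (t.1, t.2.1))) ?_ ?_ ?_ ?_ ?_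
    · intro pq h
      simp only [Finset.mem_filter, Finset.mem_product, mem_PR] at h
      exact (mem_T3 n).mpr ⟨lt_of_le_of_lt (le_of_eq h.2.1) h.1.2, h.2.2⟩
    · intro t ht
      rw [mem_T3] at ht
      exact Finset.mem_filter.mpr ⟨Finset.mem_product.mpr
        ⟨(mem_PR n).mpr (ht.1.trans ht.2), (mem_PR n).mpr ht.1⟩, rfl, ht.2⟩
    · intro pq h
      simp only [Finset.mem_filter, Finset.mem_product, mem_PR] at h
      dsimp only
      exact Prod.ext rfl (Prod.ext h.2.1 rfl)
    · intro t _; rfl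
    · intro pq h
      simp only [Finset.mem_filter, Finset.mem_product, mem_PR] at h
      dsimp only
      rw [h.2.1]

lemma sum_class_b :
    ∑ pq ∈ (posRootsA n ×ˢ posRootsA n).filter fun pq => pq.1.1 = pq.2.2,
      MonoidAlgebra.single (Equiv.swap pq.1.1 pq.1.2 * Equiv.swap pq.2.1 pq.2.2) (1 : ℂ)
    = A2 n := by
  refine Finset.sum_nbij' (fun pq => (pq.2.1, pq.1.1, pq.1.2))
    (fun t => ((t.2.1, t.2.2), (t.1, t.2.1))) ?_ ?_ ?_ ?_ ?_
  · intro pq h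
    simp only [Finset.mem_filter, Finset.mem_product, mem_PR] at h
    exact (mem_T3 n).mpr ⟨lt_of_lt_of_le h.1.2 (le_of_eq h.2.symm), h.1.1⟩
  · intro t ht
    rw [mem_T3] at ht
    exact Finset.mem_filter.mpr ⟨Finset.mem_product.mpr
      ⟨(mem_PR n).mpr ht.2, (mem_PR n).mpr ht.1⟩, rfl⟩
  · intro pq h
    simp only [Finset.mem_filter, Finset.mem_product, mem_PR] at h
    dsimp only
    exact Prod.ext rfl (Prod.ext rfl h.2)
  · intro t _; rfl
  · intro pq h
    simp only [Finset.mem_filter, Finset.mem_product, mem_PR] at h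
    dsimp only
    have hq := h.1.2
    rw [← h.2] at hq
    rw [← h.2, swapI3 n hq.ne (hq.trans h.1.1).ne h.1.1.ne]

lemma sum_class_c :
    ∑ pq ∈ (posRootsA n ×ˢ posRootsA n).filter fun pq => pq.1.2 = pq.2.1,
      MonoidAlgebra.single (Equiv.swap pq.1.1 pq.1.2 * Equiv.swap pq.2.1 pq.2.2) (1 : ℂ)
    = A1 n := by
  refine Finset.sum_nbij' (fun pq => (pq.1.1, pq.1.2, pq.2.2))
    (fun t => ((t.1, t.2.1), (t.2.1, t.2.2))) ?_ ?_ ?_ ?_ ?_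
  · intro pq h
    simp only [Finset.mem_filter, Finset.mem_product, mem_PR] at h
    exact (mem_T3 n).mpr ⟨h.1.1, lt_of_le_of_lt (le_of_eq h.2) h.1.2⟩
  · intro t ht
    rw [mem_T3] at ht
    exact Finset.mem_filter.mpr ⟨Finset.mem_product.mpr
      ⟨(mem_PR n).mpr ht.1, (mem_PR n).mpr ht.2⟩, rfl⟩
  · intro pq h
    simp only [Finset.mem_filter, Finset.mem_product, mem_PR] at h
    dsimp only
    exact Prod.ext rfl (Prod.ext h.2 rfl)
  · intro t _; rfl
  · intro pq h
    simp only [Finset.mem_filter, Finset.mem_product, mem_PR] at h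
    dsimp only
    have hq := h.1.2
    rw [← h.2] at hq
    rw [← h.2, swapI4 n h.1.1.ne (h.1.1.trans hq).ne hq.ne]

lemma sum_class_d :
    ∑ pq ∈ (posRootsA n ×ˢ posRootsA n).filter fun pq => pq.1.2 = pq.2.2,
      MonoidAlgebra.single (Equiv.swap pq.1.1 pq.1.2 * Equiv.swap pq.2.1 pq.2.2) (1 : ℂ)
    = (posRootsA n).card • (1 : MonoidAlgebra ℂ (Equiv.Perm (Fin n))) + (A2 n + A1 n) := by
  have hsplit : (posRootsA n ×ˢ posRootsA n).filter (fun pq => pq.1.2 = pq.2.2)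
      = ((posRootsA n ×ˢ posRootsA n).filter fun pq => pq.1.2 = pq.2.2 ∧ pq.1.1 = pq.2.1)
        ∪ (((posRootsA n ×ˢ posRootsA n).filter fun pq => pq.1.2 = pq.2.2 ∧ pq.1.1 < pq.2.1)
          ∪ ((posRootsA n ×ˢ posRootsA n).filter fun pq =>
              pq.1.2 = pq.2.2 ∧ pq.2.1 < pq.1.1)) := by
    rw [← Finset.filter_or, ← Finset.filter_or]
    refine Finset.filter_congr fun pq _ => ?_
    constructor
    · intro h
      rcases lt_trichotomy pq.1.1 pq.2.1 with h' | h' | h' <;> tauto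
    · tauto
  have hd1 : Disjoint
      ((posRootsA n ×ˢ posRootsA n).filter fun pq => pq.1.2 = pq.2.2 ∧ pq.1.1 < pq.2.1)
      ((posRootsA n ×ˢ posRootsA n).filter fun pq => pq.1.2 = pq.2.2 ∧ pq.2.1 < pq.1.1) := by
    rw [Finset.disjoint_left]
    intro pq h1 h2
    simp only [Finset.mem_filter] at h1 h2
    exact absurd h1.2.2 (lt_asymm h2.2.2)
  have hd2 : Disjoint
      ((posRootsA n ×ˢ posRootsA n).filter fun pq => pq.1.2 = pq.2.2 ∧ pq.1.1 = pq.2.1)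
      (((posRootsA n ×ˢ posRootsA n).filter fun pq => pq.1.2 = pq.2.2 ∧ pq.1.1 < pq.2.1)
        ∪ ((posRootsA n ×ˢ posRootsA n).filter fun pq =>
            pq.1.2 = pq.2.2 ∧ pq.2.1 < pq.1.1)) := by
    rw [Finset.disjoint_left]
    intro pq h1 h2
    simp only [Finset.mem_filter, Finset.mem_union] at h1 h2
    rcases h2 with h2 | h2
    · exact (ne_of_lt h2.2.2) h1.2.2
    · exact (ne_of_gt h2.2.2) h1.2.2
  rw [hsplit, Finset.sum_union hd2, Finset.sum_union hd1]
  congr 1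
  · have h1 : ∑ pq ∈ (posRootsA n ×ˢ posRootsA n).filter fun pq =>
          pq.1.2 = pq.2.2 ∧ pq.1.1 = pq.2.1,
        MonoidAlgebra.single (Equiv.swap pq.1.1 pq.1.2 * Equiv.swap pq.2.1 pq.2.2) (1 : ℂ)
        = ∑ _p ∈ posRootsA n, (1 : MonoidAlgebra ℂ (Equiv.Perm (Fin n))) := by
      refine Finset.sum_nbij' (fun pq => pq.1) (fun p => (p, p)) ?_ ?_ ?_ ?_ ?_
      · intro pq h
        simp only [Finset.mem_filter, Finset.mem_product] at h
        exact h.1.1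
      · intro p hp
        exact Finset.mem_filter.mpr ⟨Finset.mem_product.mpr ⟨hp, hp⟩, rfl, rfl⟩
      · intro pq h
        simp only [Finset.mem_filter, Finset.mem_product] at h
        exact Prod.ext rfl (Prod.ext h.2.2 h.2.1)
      · intro p _; rfl
      · intro pq h
        simp only [Finset.mem_filter] at h
        rw [← h.2.1, ← h.2.2, Equiv.swap_mul_self, ← MonoidAlgebra.one_def]
    rw [h1, Finset.sum_const]
  congr 1
  · refine Finset.sum_nbij' (fun pq => (pq.1.1, pq.2.1, pq.1.2))
      (fun t => ((t.1, t.2.2), (t.2.1, t.2.2))) ?_ ?_ ?_ ?_ ?_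
    · intro pq h
      simp only [Finset.mem_filter, Finset.mem_product, mem_PR] at h
      exact (mem_T3 n).mpr ⟨h.2.2, lt_of_lt_of_le h.1.2 (le_of_eq h.2.1.symm)⟩
    · intro t ht
      rw [mem_T3] at ht
      exact Finset.mem_filter.mpr ⟨Finset.mem_product.mpr
        ⟨(mem_PR n).mpr (ht.1.trans ht.2), (mem_PR n).mpr ht.2⟩, rfl, ht.1⟩
    · intro pq h
      simp only [Finset.mem_filter, Finset.mem_product, mem_PR] at h
      dsimp only
      exact Prod.ext rfl (Prod.ext rfl h.2.1)
    · intro t _; rfl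
    · intro pq h
      simp only [Finset.mem_filter, Finset.mem_product, mem_PR] at h
      dsimp only
      have hq := h.1.2
      rw [← h.2.1] at hq
      rw [← h.2.1, swapI1 n h.2.2.ne h.1.1.ne hq.ne]
  · refine Finset.sum_nbij' (fun pq => (pq.2.1, pq.1.1, pq.1.2))
      (fun t => ((t.2.1, t.2.2), (t.1, t.2.2))) ?_ ?_ ?_ ?_ ?_
    · intro pq h
      simp only [Finset.mem_filter, Finset.mem_product, mem_PR] at h
      exact (mem_T3 n).mpr ⟨h.2.2, h.1.1⟩
    · intro t ht
      rw [mem_T3] at ht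
      exact Finset.mem_filter.mpr ⟨Finset.mem_product.mpr
        ⟨(mem_PR n).mpr ht.2, (mem_PR n).mpr (ht.1.trans ht.2)⟩, rfl, ht.1⟩
    · intro pq h
      simp only [Finset.mem_filter, Finset.mem_product, mem_PR] at h
      dsimp only
      exact Prod.ext rfl (Prod.ext rfl h.2.1)
    · intro t _; rfl
    · intro pq h
      simp only [Finset.mem_filter, Finset.mem_product, mem_PR] at h
      dsimp only
      have hq := h.1.2
      rw [← h.2.1] at hq
      rw [← h.2.1, swapI2 n h.2.2.ne hq.ne h.1.1.ne]

lemma Omega_eq : OmegaSn n = (1 / 4 : ℂ) •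
    ((2 * (posRootsA n).card) • (1 : MonoidAlgebra ℂ (Equiv.Perm (Fin n)))
      + (A2 n + A1 n)) := by
  rw [OmegaSn]
  congr 1
  have hprod : ∑ p ∈ posRootsA n, ∑ q ∈ posRootsA n,
      ((dotR n (rootVecA n p) (rootVecA n q) : ℝ) : ℂ) •
        MonoidAlgebra.single (Equiv.swap p.1 p.2 * Equiv.swap q.1 q.2) (1 : ℂ)
      = ∑ pq ∈ posRootsA n ×ˢ posRootsA n,
          ((dotR n (rootVecA n pq.1) (rootVecA n pq.2) : ℝ) : ℂ) •
            MonoidAlgebra.single (Equiv.swap pq.1.1 pq.1.2 * Equiv.swap pq.2.1 pq.2.2)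
              (1 : ℂ) := by
    rw [Finset.sum_product]
  rw [hprod]
  have step1 : ∑ pq ∈ posRootsA n ×ˢ posRootsA n,
      ((dotR n (rootVecA n pq.1) (rootVecA n pq.2) : ℝ) : ℂ) •
        MonoidAlgebra.single (Equiv.swap pq.1.1 pq.1.2 * Equiv.swap pq.2.1 pq.2.2) (1 : ℂ)
      = ∑ pq ∈ posRootsA n ×ˢ posRootsA n,
          ((if pq.1.1 = pq.2.1 then
              MonoidAlgebra.single (Equiv.swap pq.1.1 pq.1.2 * Equiv.swap pq.2.1 pq.2.2)
                (1 : ℂ) else 0)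
            - (if pq.1.1 = pq.2.2 then
              MonoidAlgebra.single (Equiv.swap pq.1.1 pq.1.2 * Equiv.swap pq.2.1 pq.2.2)
                (1 : ℂ) else 0)
            - (if pq.1.2 = pq.2.1 then
              MonoidAlgebra.single (Equiv.swap pq.1.1 pq.1.2 * Equiv.swap pq.2.1 pq.2.2)
                (1 : ℂ) else 0)
            + (if pq.1.2 = pq.2.2 then
              MonoidAlgebra.single (Equiv.swap pq.1.1 pq.1.2 * Equiv.swap pq.2.1 pq.2.2)
                (1 : ℂ) else 0)) := by
    refine Finset.sum_congr rfl fun pq _ => ?_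
    rw [dot_eq n pq.1 pq.2]
    simp only [sub_smul, add_smul, ite_smul, one_smul, zero_smul]
  rw [step1, Finset.sum_add_distrib, Finset.sum_sub_distrib, Finset.sum_sub_distrib,
    ← Finset.sum_filter, ← Finset.sum_filter, ← Finset.sum_filter, ← Finset.sum_filter,
    sum_class_a n, sum_class_b n, sum_class_c n, sum_class_d n, two_mul, add_smul]
  abel

lemma JM_eq : ∑ i, jucysMurphy n i ^ 2
    = (posRootsA n).card • (1 : MonoidAlgebra ℂ (Equiv.Perm (Fin n))) + (A2 n + A1 n) := by
  have h2 : ∑ i, jucysMurphy n i ^ 2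
      = ∑ t ∈ (Finset.univ.filter fun t : Fin n × Fin n × Fin n =>
            t.2.1 < t.1 ∧ t.2.2 < t.1),
          MonoidAlgebra.single (Equiv.swap t.2.1 t.1 * Equiv.swap t.2.2 t.1) (1 : ℂ) := by
    rw [Finset.sum_filter, Fintype.sum_prod_type]
    refine Finset.sum_congr rfl fun i _ => ?_
    have h1 : jucysMurphy n i ^ 2
        = ∑ jk ∈ ((Finset.univ.filter fun j : Fin n => j < i) ×ˢ
            (Finset.univ.filter fun j : Fin n => j < i)),
            MonoidAlgebra.single (Equiv.swap jk.1 i * Equiv.swap jk.2 i) (1 : ℂ) := by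
      rw [sq, jucysMurphy, Finset.sum_mul_sum]
      rw [Finset.sum_product]
      refine Finset.sum_congr rfl fun j _ => Finset.sum_congr rfl fun k _ => ?_
      rw [MonoidAlgebra.single_mul_single, one_mul]
    have hset : ((Finset.univ.filter fun j : Fin n => j < i) ×ˢ
          (Finset.univ.filter fun j : Fin n => j < i))
        = (Finset.univ : Finset (Fin n × Fin n)).filter fun p => p.1 < i ∧ p.2 < i := by
      ext p
      simp [Finset.mem_product]
    rw [h1, hset, Finset.sum_filter]
  rw [h2]
  have hsplit : ((Finset.univ : Finset (Fin n × Fin n × Fin n)).filter fun t =>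
        t.2.1 < t.1 ∧ t.2.2 < t.1)
      = ((Finset.univ.filter fun t : Fin n × Fin n × Fin n =>
            (t.2.1 < t.1 ∧ t.2.2 < t.1) ∧ t.2.1 = t.2.2)
        ∪ ((Finset.univ.filter fun t : Fin n × Fin n × Fin n =>
            (t.2.1 < t.1 ∧ t.2.2 < t.1) ∧ t.2.1 < t.2.2)
          ∪ (Finset.univ.filter fun t : Fin n × Fin n × Fin n =>
            (t.2.1 < t.1 ∧ t.2.2 < t.1) ∧ t.2.2 < t.2.1))) := by
    rw [← Finset.filter_or, ← Finset.filter_or]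
    refine Finset.filter_congr fun t _ => ?_
    constructor
    · intro h
      rcases lt_trichotomy t.2.1 t.2.2 with h' | h' | h' <;> tauto
    · tauto
  have hd1 : Disjoint
      (Finset.univ.filter fun t : Fin n × Fin n × Fin n =>
        (t.2.1 < t.1 ∧ t.2.2 < t.1) ∧ t.2.1 < t.2.2)
      (Finset.univ.filter fun t : Fin n × Fin n × Fin n =>
        (t.2.1 < t.1 ∧ t.2.2 < t.1) ∧ t.2.2 < t.2.1) := by
    rw [Finset.disjoint_left]
    intro t h1 h2
    simp only [Finset.mem_filter] at h1 h2
    exact absurd h1.2.2 (lt_asymm h2.2.2)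
  have hd2 : Disjoint
      (Finset.univ.filter fun t : Fin n × Fin n × Fin n =>
        (t.2.1 < t.1 ∧ t.2.2 < t.1) ∧ t.2.1 = t.2.2)
      ((Finset.univ.filter fun t : Fin n × Fin n × Fin n =>
          (t.2.1 < t.1 ∧ t.2.2 < t.1) ∧ t.2.1 < t.2.2)
        ∪ (Finset.univ.filter fun t : Fin n × Fin n × Fin n =>
          (t.2.1 < t.1 ∧ t.2.2 < t.1) ∧ t.2.2 < t.2.1)) := by
    rw [Finset.disjoint_left]
    intro t h1 h2
    simp only [Finset.mem_filter, Finset.mem_union] at h1 h2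
    rcases h2 with h2 | h2
    · exact (ne_of_lt h2.2.2) h1.2.2
    · exact (ne_of_gt h2.2.2) h1.2.2
  rw [hsplit, Finset.sum_union hd2, Finset.sum_union hd1]
  congr 1
  · have h1 : ∑ t ∈ Finset.univ.filter fun t : Fin n × Fin n × Fin n =>
          (t.2.1 < t.1 ∧ t.2.2 < t.1) ∧ t.2.1 = t.2.2,
        MonoidAlgebra.single (Equiv.swap t.2.1 t.1 * Equiv.swap t.2.2 t.1) (1 : ℂ)
        = ∑ _p ∈ posRootsA n, (1 : MonoidAlgebra ℂ (Equiv.Perm (Fin n))) := by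
      refine Finset.sum_nbij' (fun t => (t.2.1, t.1)) (fun p => (p.2, p.1, p.1)) ?_ ?_ ?_ ?_ ?_
      · intro t h
        simp only [Finset.mem_filter, Finset.mem_univ, true_and] at h
        exact (mem_PR n).mpr h.1.1
      · intro p hp
        rw [mem_PR] at hp
        exact Finset.mem_filter.mpr ⟨Finset.mem_univ _, ⟨hp, hp⟩, rfl⟩
      · intro t h
        simp only [Finset.mem_filter, Finset.mem_univ, true_and] at h
        dsimp only
        exact Prod.ext rfl (Prod.ext rfl h.2)
      · intro p _; rfl
      · intro t h
        simp only [Finset.mem_filter, Finset.mem_univ, true_and] at h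
        rw [← h.2, Equiv.swap_mul_self, ← MonoidAlgebra.one_def]
    rw [h1, Finset.sum_const]
  congr 1
  · refine Finset.sum_nbij' (fun t => (t.2.1, t.2.2, t.1))
      (fun t => (t.2.2, t.1, t.2.1)) ?_ ?_ ?_ ?_ ?_
    · intro t h
      simp only [Finset.mem_filter, Finset.mem_univ, true_and] at h
      exact (mem_T3 n).mpr ⟨h.2, h.1.2⟩
    · intro t ht
      rw [mem_T3] at ht
      exact Finset.mem_filter.mpr ⟨Finset.mem_univ _, ⟨ht.1.trans ht.2, ht.2⟩, ht.1⟩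
    · intro t _; rfl
    · intro t _; rfl
    · intro t h
      simp only [Finset.mem_filter, Finset.mem_univ, true_and] at h
      dsimp only
      rw [swapI1 n h.2.ne h.1.1.ne h.1.2.ne]
  · refine Finset.sum_nbij' (fun t => (t.2.2, t.2.1, t.1))
      (fun t => (t.2.2, t.2.1, t.1)) ?_ ?_ ?_ ?_ ?_
    · intro t h
      simp only [Finset.mem_filter, Finset.mem_univ, true_and] at h
      exact (mem_T3 n).mpr ⟨h.2, h.1.1⟩
    · intro t ht
      rw [mem_T3] at ht
      exact Finset.mem_filter.mpr ⟨Finset.mem_univ _, ⟨ht.2, ht.1.trans ht.2⟩, ht.1⟩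
    · intro t _; rfl
    · intro t _; rfl
    · intro t h
      simp only [Finset.mem_filter, Finset.mem_univ, true_and] at h
      dsimp only
      rw [swapI2 n h.2.ne h.1.2.ne h.1.1.ne]


/-- STATEMENT 13 (a) and (b):
`Ω_{S_n} = (1/4)(n(n−1) + e_{(123)})` and
`Ω_{S_n} = (1/4)(n(n−1)/2 + Σ_i T_i²)`. -/
theorem statement13 (hn : 2 ≤ n) :
    OmegaSn n = (1 / 4 : ℂ) •
        (((n : ℂ) * ((n : ℂ) - 1)) • (1 : MonoidAlgebra ℂ (Equiv.Perm (Fin n)))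
          + threeCycleSum n) ∧
    OmegaSn n = (1 / 4 : ℂ) •
        ((((n : ℂ) * ((n : ℂ) - 1)) / 2) • (1 : MonoidAlgebra ℂ (Equiv.Perm (Fin n)))
          + ∑ i, jucysMurphy n i ^ 2) := by
  have hc2 : ((2 * (posRootsA n).card : ℕ) : ℂ) = (n : ℂ) * ((n : ℂ) - 1) := by
    have h := card_PR n
    have hn1 : n ≤ n * n := Nat.le_mul_of_pos_left n (by omega)
    rw [h, Nat.cast_sub hn1]
    push_cast
    ring
  have hA : OmegaSn n = (1 / 4 : ℂ) •
      (((n : ℂ) * ((n : ℂ) - 1)) • (1 : MonoidAlgebra ℂ (Equiv.Perm (Fin n)))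
        + threeCycleSum n) := by
    rw [Omega_eq n, threeCycleSum_eq n,
      ← Nat.cast_smul_eq_nsmul ℂ (2 * (posRootsA n).card), hc2]
    congr 1
    abel
  refine ⟨hA, ?_⟩
  rw [hA, JM_eq n, threeCycleSum_eq n]
  have hcast : (((posRootsA n).card : ℕ) : ℂ) = (n : ℂ) * ((n : ℂ) - 1) / 2 := by
    have h2 := hc2
    push_cast at h2
    linear_combination h2 / 2
  rw [← Nat.cast_smul_eq_nsmul ℂ ((posRootsA n).card), hcast]
  module

end Statement13

end
end
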